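/- arXiv:2011.10516 — 8 statements merged into one kernel-verified Lean document; each statement's English description precedes it below -/
import Mathlib

section
/- Let P be a symmetric positive semidefinite d×d matrix, H a q×d matrix, R a symmetric positive definite q×q matrix, and define the Kalman gain K(P) = P Hᵀ (R + H P Hᵀ)^{-1}. Then (Id - K(P)H) P = P^{1/2} (Id + P^{1/2} Hᵀ R^{-1} H P^{1/2})^{-1} P^{1/2}. -/
open Matrix

open scoped ComplexOrder in
/-- The positive semidefinite square root of a positive semidefinite matrix
(the definition `Matrix.PosSemidef.sqrt` of the older Mathlib, since removed). -/
noncomputable def Matrix.PosSemidef.sqrt {n : Type*} [Fintype n] [DecidableEq n] {𝕜 : Type*}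
    [RCLike 𝕜] {A : Matrix n n 𝕜} (hA : A.PosSemidef) : Matrix n n 𝕜 :=
  hA.1.eigenvectorUnitary.1 * diagonal ((↑) ∘ (√·) ∘ hA.1.eigenvalues) *
  (star hA.1.eigenvectorUnitary : Matrix n n 𝕜)

lemma Matrix.PosSemidef.sqrt_mul_self {n : Type*} [Fintype n] [DecidableEq n]
    {A : Matrix n n ℝ} (hA : A.PosSemidef) : hA.sqrt * hA.sqrt = A := by
  have hU : (star hA.1.eigenvectorUnitary : Matrix n n ℝ) * hA.1.eigenvectorUnitary.1 = 1 :=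
    Unitary.coe_star_mul_self _
  have hD : diagonal ((↑) ∘ (√·) ∘ hA.1.eigenvalues) * diagonal ((↑) ∘ (√·) ∘ hA.1.eigenvalues)
      = diagonal (RCLike.ofReal ∘ hA.1.eigenvalues : n → ℝ) := by
    rw [diagonal_mul_diagonal]
    congr 1
    funext i
    simp [Real.mul_self_sqrt (hA.eigenvalues_nonneg i)]
  conv_rhs => rw [hA.1.spectral_theorem, Unitary.conjStarAlgAut_apply]
  unfold Matrix.PosSemidef.sqrt
  calc _ = hA.1.eigenvectorUnitary.1 * diagonal ((↑) ∘ (√·) ∘ hA.1.eigenvalues) *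
        ((star hA.1.eigenvectorUnitary : Matrix n n ℝ) * hA.1.eigenvectorUnitary.1) *
        diagonal ((↑) ∘ (√·) ∘ hA.1.eigenvalues) * (star hA.1.eigenvectorUnitary : Matrix n n ℝ) := by
          simp only [Matrix.mul_assoc]; rfl
    _ = _ := by rw [hU, Matrix.mul_one, Matrix.mul_assoc _ (diagonal _) (diagonal _), hD]

lemma Matrix.PosSemidef.posSemidef_sqrt {n : Type*} [Fintype n] [DecidableEq n]
    {A : Matrix n n ℝ} (hA : A.PosSemidef) : hA.sqrt.PosSemidef := by
  have hD : (diagonal ((↑) ∘ (√·) ∘ hA.1.eigenvalues) : Matrix n n ℝ).PosSemidef := by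
    rw [posSemidef_diagonal_iff]
    intro i
    simp [Real.sqrt_nonneg]
  have := hD.mul_mul_conjTranspose_same (hA.1.eigenvectorUnitary : Matrix n n ℝ)
  unfold Matrix.PosSemidef.sqrt
  rw [Matrix.star_eq_conjTranspose]
  exact this

/-- With Kalman gain `K(P) = P Hᵀ (R + H P Hᵀ)⁻¹` one has
`(Id - K(P) H) P = P^{1/2} (Id + P^{1/2} Hᵀ R⁻¹ H P^{1/2})⁻¹ P^{1/2}`. -/
theorem stmt_3 {d q : ℕ} (P : Matrix (Fin d) (Fin d) ℝ) (hP : P.PosSemidef)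
    (H : Matrix (Fin q) (Fin d) ℝ) (R : Matrix (Fin q) (Fin q) ℝ) (hR : R.PosDef) :
    (1 - (P * Hᵀ * (R + H * P * Hᵀ)⁻¹) * H) * P =
      hP.sqrt * (1 + hP.sqrt * Hᵀ * R⁻¹ * H * hP.sqrt)⁻¹ * hP.sqrt := by
  set S := hP.sqrt with hSdef
  have hSS : S * S = P := hP.sqrt_mul_self
  have hSherm : Sᴴ = S := hP.posSemidef_sqrt.isHermitian
  have hHt : Hᵀ = Hᴴ := (conjTranspose_eq_transpose_of_trivial H).symm
  have hA : (R + H * P * Hᵀ).PosDef := by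
    rw [hHt]
    exact hR.add_posSemidef (hP.mul_mul_conjTranspose_same H)
  have hM : (1 + S * Hᵀ * R⁻¹ * H * S).PosDef := by
    have h1 : (S * Hᵀ * R⁻¹ * H * S) = Sᴴ * (Hᴴ * R⁻¹ * H) * S := by
      rw [hSherm, hHt]; simp only [Matrix.mul_assoc]
    have h2 : (Sᴴ * (Hᴴ * R⁻¹ * H) * S).PosSemidef := by
      have hR' : (Hᴴ * R⁻¹ * H).PosSemidef :=
        (hR.inv.posSemidef).conjTranspose_mul_mul_same H
      exact hR'.conjTranspose_mul_mul_same S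
    rw [h1]
    exact Matrix.PosDef.add_posSemidef Matrix.PosDef.one h2
  have hAinv' : (R + H * P * Hᵀ)⁻¹ * (R + H * P * Hᵀ) = 1 :=
    nonsing_inv_mul _ hA.det_pos.ne'.isUnit
  have hMinv : (1 + S * Hᵀ * R⁻¹ * H * S) * (1 + S * Hᵀ * R⁻¹ * H * S)⁻¹ = 1 :=
    mul_nonsing_inv _ hM.det_pos.ne'.isUnit
  -- key: (1 - K H) * S * (1 + S Hᵀ R⁻¹ H S) = S
  have key : (1 - (P * Hᵀ * (R + H * P * Hᵀ)⁻¹) * H) * S * (1 + S * Hᵀ * R⁻¹ * H * S) = S := by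
    have hHSM : H * (S * (1 + S * Hᵀ * R⁻¹ * H * S)) = (R + H * P * Hᵀ) * (R⁻¹ * H * S) := by
      have h3 : (R + H * P * Hᵀ) * (R⁻¹ * H * S)
          = R * R⁻¹ * (H * S) + H * P * Hᵀ * R⁻¹ * H * S := by
        simp only [Matrix.mul_add, Matrix.add_mul, Matrix.mul_sub, Matrix.sub_mul, Matrix.one_mul, Matrix.mul_one, Matrix.mul_assoc]
      rw [h3, mul_nonsing_inv _ hR.det_pos.ne'.isUnit, ← hSS]
      simp only [Matrix.mul_add, Matrix.add_mul, Matrix.mul_sub, Matrix.sub_mul, Matrix.one_mul, Matrix.mul_one, Matrix.mul_assoc]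
    have expand : (1 - (P * Hᵀ * (R + H * P * Hᵀ)⁻¹) * H) * S * (1 + S * Hᵀ * R⁻¹ * H * S)
        = S + S * S * Hᵀ * R⁻¹ * H * S
          - P * Hᵀ * ((R + H * P * Hᵀ)⁻¹ * (H * (S * (1 + S * Hᵀ * R⁻¹ * H * S)))) := by
      simp only [Matrix.mul_add, Matrix.add_mul, Matrix.mul_sub, Matrix.sub_mul, Matrix.one_mul, Matrix.mul_one, Matrix.mul_assoc]
      abel
    have h4 : (R + H * P * Hᵀ)⁻¹ * ((R + H * P * Hᵀ) * (R⁻¹ * H * S)) = R⁻¹ * H * S := by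
      rw [← Matrix.mul_assoc, hAinv', Matrix.one_mul]
    rw [expand, hHSM, h4, ← hSS]
    simp only [Matrix.mul_assoc]
    abel
  calc (1 - (P * Hᵀ * (R + H * P * Hᵀ)⁻¹) * H) * P
      = (1 - (P * Hᵀ * (R + H * P * Hᵀ)⁻¹) * H) * S
          * ((1 + S * Hᵀ * R⁻¹ * H * S) * (1 + S * Hᵀ * R⁻¹ * H * S)⁻¹) * S := by
        rw [hMinv, mul_one, mul_assoc, hSS]
    _ = (1 - (P * Hᵀ * (R + H * P * Hᵀ)⁻¹) * H) * S * (1 + S * Hᵀ * R⁻¹ * H * S)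
          * ((1 + S * Hᵀ * R⁻¹ * H * S)⁻¹ * S) := by simp only [Matrix.mul_assoc]
    _ = S * (1 + S * Hᵀ * R⁻¹ * H * S)⁻¹ * S := by rw [key]; simp only [Matrix.mul_assoc]
end

section
/- Let E be a d×M real matrix, H a q×d matrix, R a symmetric positive definite q×q matrix, and P = E Eᵀ. Then E (Id_M + Eᵀ Hᵀ R^{-1} H E)^{-1} Eᵀ = (Id_d - K(P) H) P, where K(P) = P Hᵀ (R + H P Hᵀ)^{-1}. -/
open Matrix

private lemma stmt_4_aux {d q M : ℕ} (E : Matrix (Fin d) (Fin M) ℝ)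
    (H : Matrix (Fin q) (Fin d) ℝ) (R Ri Si : Matrix (Fin q) (Fin q) ℝ)
    (Ai : Matrix (Fin M) (Fin M) ℝ)
    (P : Matrix (Fin d) (Fin d) ℝ) (hP : P = E * Eᵀ)
    (hRR : R * Ri = 1)
    (hSS : Si * (R + H * P * Hᵀ) = 1)
    (hAA : (1 + Eᵀ * Hᵀ * Ri * H * E) * Ai = 1) :
    E * Ai * Eᵀ = (1 - (P * Hᵀ * Si) * H) * P := by
  have hmid : Ri - Si - Si * (H * P * Hᵀ) * Ri = 0 := by
    have h1 : Si * (R + H * P * Hᵀ) * Ri = Ri := by rw [hSS, one_mul]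
    have h2 : Si * (R + H * P * Hᵀ) * Ri = Si + Si * (H * P * Hᵀ) * Ri := by
      rw [Matrix.mul_add, Matrix.add_mul, Matrix.mul_assoc Si R Ri, hRR, Matrix.mul_one]
    rw [h2] at h1
    rw [sub_sub, sub_eq_zero]
    exact h1.symm
  have key : (1 - P * Hᵀ * Si * H) * (1 + P * Hᵀ * Ri * H) = 1 := by
    have expand : (1 - P * Hᵀ * Si * H) * (1 + P * Hᵀ * Ri * H)
        = 1 + P * Hᵀ * (Ri - Si - Si * (H * P * Hᵀ) * Ri) * H := by
      simp only [Matrix.mul_add, Matrix.add_mul, Matrix.mul_sub, Matrix.sub_mul,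
        Matrix.mul_one, Matrix.one_mul, Matrix.mul_assoc]
      abel
    rw [expand, hmid]
    simp
  have hEA : E * (1 + Eᵀ * Hᵀ * Ri * H * E) = (1 + P * Hᵀ * Ri * H) * E := by
    subst hP
    simp only [Matrix.mul_add, Matrix.add_mul, Matrix.mul_one, Matrix.one_mul,
      Matrix.mul_assoc]
  have hEAi : E * Ai = (1 - P * Hᵀ * Si * H) * E := by
    calc E * Ai = 1 * (E * Ai) := (Matrix.one_mul _).symm
      _ = ((1 - P * Hᵀ * Si * H) * (1 + P * Hᵀ * Ri * H)) * (E * Ai) := by rw [key]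
      _ = (1 - P * Hᵀ * Si * H) * (((1 + P * Hᵀ * Ri * H) * E) * Ai) := by
          simp only [Matrix.mul_assoc]
      _ = (1 - P * Hᵀ * Si * H) * ((E * (1 + Eᵀ * Hᵀ * Ri * H * E)) * Ai) := by rw [hEA]
      _ = (1 - P * Hᵀ * Si * H) * (E * ((1 + Eᵀ * Hᵀ * Ri * H * E) * Ai)) := by
          simp only [Matrix.mul_assoc]
      _ = (1 - P * Hᵀ * Si * H) * E := by rw [hAA, Matrix.mul_one]
  calc E * Ai * Eᵀ = (1 - P * Hᵀ * Si * H) * E * Eᵀ := by rw [hEAi]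
    _ = (1 - P * Hᵀ * Si * H) * P := by rw [hP, Matrix.mul_assoc]
    _ = (1 - (P * Hᵀ * Si) * H) * P := by rw [Matrix.mul_assoc (P * Hᵀ)]

/-- With `P = E Eᵀ` and `K(P) = P Hᵀ (R + H P Hᵀ)⁻¹` one has
`E (Id_M + Eᵀ Hᵀ R⁻¹ H E)⁻¹ Eᵀ = (Id_d - K(P) H) P`. -/
theorem stmt_4 {d q M : ℕ} (E : Matrix (Fin d) (Fin M) ℝ)
    (H : Matrix (Fin q) (Fin d) ℝ) (R : Matrix (Fin q) (Fin q) ℝ) (hR : R.PosDef)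
    (P : Matrix (Fin d) (Fin d) ℝ) (hP : P = E * Eᵀ) :
    E * (1 + Eᵀ * Hᵀ * R⁻¹ * H * E)⁻¹ * Eᵀ =
      (1 - (P * Hᵀ * (R + H * P * Hᵀ)⁻¹) * H) * P := by
  have hApd : (1 + Eᵀ * Hᵀ * R⁻¹ * H * E).PosDef := by
    have h1 : ((H * E)ᵀ * R⁻¹ * (H * E)).PosSemidef := by
      have := (hR.inv.posSemidef).conjTranspose_mul_mul_same (H * E)
      simpa using this
    have := (Matrix.PosDef.one (n := Fin M) (R := ℝ)).add_posSemidef h1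
    simpa [Matrix.transpose_mul, Matrix.mul_assoc] using this
  have hSpd : (R + H * P * Hᵀ).PosDef := by
    have h1 : ((H * E) * (H * E)ᵀ).PosSemidef := by
      have := (Matrix.PosSemidef.one (n := Fin M) (R := ℝ)).mul_mul_conjTranspose_same (H * E)
      simpa using this
    have := hR.add_posSemidef h1
    simpa [hP, Matrix.transpose_mul, Matrix.mul_assoc] using this
  exact stmt_4_aux E H R R⁻¹ (R + H * P * Hᵀ)⁻¹ (1 + Eᵀ * Hᵀ * R⁻¹ * H * E)⁻¹ P hP
    (Matrix.mul_nonsing_inv R ((Matrix.isUnit_iff_isUnit_det R).mp hR.isUnit))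
    (Matrix.nonsing_inv_mul _ ((Matrix.isUnit_iff_isUnit_det _).mp hSpd.isUnit))
    (Matrix.mul_nonsing_inv _ ((Matrix.isUnit_iff_isUnit_det _).mp hApd.isUnit))
end

section
/- For any symmetric positive semidefinite d×d matrix P and t ≥ 0, with Θ = Hᵀ R^{-1} H for a q×d matrix H and symmetric positive definite q×q matrix R, the spectral norm satisfies ‖e^{-tPΘ} - Id‖ ≤ t ‖P‖ ‖Θ‖. -/
open Matrix NormedSpace
open scoped Matrix.Norms.L2Operator

/-- L2 operator norm of a real diagonal matrix with entries of abs value ≤ 1 is ≤ 1. -/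
lemma aux_diag_norm_le {d : ℕ} (v : Fin d → ℝ) (hv : ∀ i, |v i| ≤ 1) :
    ‖(Matrix.diagonal v : Matrix (Fin d) (Fin d) ℝ)‖ ≤ 1 := by
  rw [Matrix.l2_opNorm_def]
  refine ContinuousLinearMap.opNorm_le_bound _ zero_le_one (fun x => ?_)
  rw [one_mul]
  simp only [LinearEquiv.trans_apply, LinearMap.coe_toContinuousLinearMap',
    Matrix.toEuclideanLin_apply]
  rw [EuclideanSpace.norm_eq, EuclideanSpace.norm_eq]
  apply Real.sqrt_le_sqrt
  apply Finset.sum_le_sum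
  intro i _
  simp only [PiLp.toLp_apply, Matrix.mulVec_diagonal]
  have h1 : ‖v i * ((WithLp.equiv 2 (Fin d → ℝ)) x) i‖ ≤ ‖x i‖ := by
    rw [norm_mul]
    calc ‖v i‖ * ‖((WithLp.equiv 2 (Fin d → ℝ)) x) i‖
        ≤ 1 * ‖((WithLp.equiv 2 (Fin d → ℝ)) x) i‖ := by
          apply mul_le_mul_of_nonneg_right _ (norm_nonneg _)
          simpa [Real.norm_eq_abs] using hv i
      _ = ‖x i‖ := one_mul _
  exact pow_le_pow_left₀ (norm_nonneg _) h1 2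

lemma aux_one_norm_le {d : ℕ} : ‖(1 : Matrix (Fin d) (Fin d) ℝ)‖ ≤ 1 := by
  rw [← Matrix.diagonal_one]
  exact aux_diag_norm_le _ (fun i => by simp)

/-- If `A * Q = Q * B` then `exp A * Q = Q * exp B`. -/
lemma aux_exp_intertwine {d : ℕ} (A Q B : Matrix (Fin d) (Fin d) ℝ) (h : A * Q = Q * B) :
    exp A * Q = Q * exp B := by
  have hpow : ∀ n : ℕ, A ^ n * Q = Q * B ^ n := by
    intro n
    induction n with
    | zero => simp
    | succ n ih => rw [pow_succ, pow_succ, mul_assoc, h, ← mul_assoc, ih, mul_assoc]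
  simp only [exp_eq_tsum ℝ]
  rw [← Summable.tsum_mul_right Q (expSeries_summable' (𝕂 := ℝ) A),
    ← Summable.tsum_mul_left Q (expSeries_summable' (𝕂 := ℝ) B)]
  apply tsum_congr
  intro n
  rw [smul_mul_assoc, mul_smul_comm, hpow n]

/-- Exponential of a real diagonal matrix (w.r.t. the L2 operator norm instances). -/
lemma aux_exp_diagonal {d : ℕ} (w : Fin d → ℝ) :
    exp (Matrix.diagonal w) = Matrix.diagonal (fun i => Real.exp (w i)) := by
  simp only [exp_eq_tsum ℝ]
  have hsum : Summable (fun n : ℕ => (n.factorial : ℝ)⁻¹ • w ^ n) := expSeries_summable' (𝕂 := ℝ) w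
  let L : (Fin d → ℝ) →ₗ[ℝ] Matrix (Fin d) (Fin d) ℝ :=
    { toFun := Matrix.diagonal
      map_add' := fun a b => (Matrix.diagonal_add a b).symm
      map_smul' := fun c a => Matrix.diagonal_smul c a }
  let Lc : (Fin d → ℝ) →L[ℝ] Matrix (Fin d) (Fin d) ℝ :=
    { toLinearMap := L, cont := L.continuous_of_finiteDimensional }
  have hterm : ∀ n : ℕ, (n.factorial : ℝ)⁻¹ • Matrix.diagonal w ^ n = Lc ((n.factorial : ℝ)⁻¹ • w ^ n) := by
    intro n
    show _ = Matrix.diagonal ((n.factorial : ℝ)⁻¹ • w ^ n)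
    rw [Matrix.diagonal_smul, Matrix.diagonal_pow]
  calc (∑' n : ℕ, (n.factorial : ℝ)⁻¹ • Matrix.diagonal w ^ n)
      = ∑' n : ℕ, Lc ((n.factorial : ℝ)⁻¹ • w ^ n) := tsum_congr hterm
    _ = Lc (∑' n : ℕ, (n.factorial : ℝ)⁻¹ • w ^ n) := (Lc.map_tsum hsum).symm
    _ = Matrix.diagonal (∑' n : ℕ, (n.factorial : ℝ)⁻¹ • w ^ n) := rfl
    _ = Matrix.diagonal (fun i => Real.exp (w i)) := by
        have hvec : (∑' n : ℕ, (n.factorial : ℝ)⁻¹ • w ^ n) = fun i => Real.exp (w i) := by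
          funext i
          rw [tsum_apply hsum]
          have hc : ∀ n : ℕ, ((n.factorial : ℝ)⁻¹ • w ^ n) i = (n.factorial : ℝ)⁻¹ • (w i) ^ n := by
            intro n; simp
          rw [tsum_congr hc, Real.exp_eq_exp_ℝ, exp_eq_tsum ℝ]
        rw [hvec]

/-- The exponential of `-(s • S)` is a contraction when `S` is psd and `s ≥ 0`. -/
lemma aux_exp_psd {d : ℕ} (S : Matrix (Fin d) (Fin d) ℝ) (hS : S.PosSemidef)
    {s : ℝ} (hs : 0 ≤ s) : ‖exp (-(s • S))‖ ≤ 1 := by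
  have hH := hS.1
  obtain ⟨U, v, hUU, hUU', hv, hspec⟩ : ∃ (U : Matrix (Fin d) (Fin d) ℝ) (v : Fin d → ℝ),
      star U * U = 1 ∧ U * star U = 1 ∧ (∀ i, 0 ≤ v i) ∧
      S = U * Matrix.diagonal v * star U := by
    refine ⟨(hH.eigenvectorUnitary : Matrix (Fin d) (Fin d) ℝ), hH.eigenvalues, ?_, ?_, ?_, ?_⟩
    · exact Matrix.mem_unitaryGroup_iff'.mp (hH.eigenvectorUnitary).2
    · exact Matrix.mem_unitaryGroup_iff.mp (hH.eigenvectorUnitary).2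
    · exact fun i => hS.eigenvalues_nonneg i
    · simpa using hH.spectral_theorem
  have hnU : ‖U‖ ≤ 1 := by
    have h2 : ‖Uᴴ * U‖ = ‖U‖ * ‖U‖ := Matrix.l2_opNorm_conjTranspose_mul_self U
    rw [← Matrix.star_eq_conjTranspose, hUU] at h2
    nlinarith [norm_nonneg U, aux_one_norm_le (d := d)]
  have hnstarU : ‖star U‖ ≤ 1 := by
    rw [Matrix.star_eq_conjTranspose, Matrix.l2_opNorm_conjTranspose]
    exact hnU
  -- intertwining relation
  have hSU : S * U = U * Matrix.diagonal v := by
    rw [hspec, mul_assoc, hUU, mul_one]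
  have hconj : (-(s • S)) * U = U * (-(s • Matrix.diagonal v)) := by
    rw [Matrix.neg_mul, Matrix.smul_mul, hSU, Matrix.mul_neg, mul_smul_comm]
  have hexpconj := aux_exp_intertwine _ U _ hconj
  have hexp : exp (-(s • S)) = U * exp (-(s • Matrix.diagonal v)) * star U := by
    have h2 : exp (-(s • S)) * (U * star U)
        = U * exp (-(s • Matrix.diagonal v)) * star U := by
      rw [← mul_assoc, hexpconj]
    rwa [hUU', mul_one] at h2
  have hdiag : -(s • Matrix.diagonal v) = Matrix.diagonal (fun i => -(s * v i)) := by
    rw [← Matrix.diagonal_smul, ← Matrix.diagonal_neg]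
    rfl
  have hD : ‖exp (-(s • Matrix.diagonal v))‖ ≤ 1 := by
    rw [hdiag, aux_exp_diagonal]
    apply aux_diag_norm_le
    intro i
    rw [Real.abs_exp]
    apply Real.exp_le_one_iff.mpr
    have := hv i
    nlinarith
  rw [hexp]
  calc ‖U * exp (-(s • Matrix.diagonal v)) * star U‖
      ≤ ‖U * exp (-(s • Matrix.diagonal v))‖ * ‖star U‖ := norm_mul_le _ _
    _ ≤ ‖U‖ * ‖exp (-(s • Matrix.diagonal v))‖ * ‖star U‖ :=
        mul_le_mul_of_nonneg_right (norm_mul_le _ _) (norm_nonneg _)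
    _ ≤ 1 := by
        have h1 := norm_nonneg (exp (-(s • Matrix.diagonal v)))
        have h2 := norm_nonneg U
        have h3 := norm_nonneg (star U)
        nlinarith [mul_le_mul hnU hD h1 zero_le_one, mul_nonneg h2 h1]

/-- With `Θ = Hᵀ R⁻¹ H`, the spectral norm satisfies `‖e^{-tPΘ} - Id‖ ≤ t ‖P‖ ‖Θ‖`
for every symmetric positive semidefinite `P` and `t ≥ 0`. -/
theorem stmt_7 {d q : ℕ} (P : Matrix (Fin d) (Fin d) ℝ) (hP : P.PosSemidef)
    (H : Matrix (Fin q) (Fin d) ℝ) (R : Matrix (Fin q) (Fin q) ℝ) (hR : R.PosDef)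
    (Θ : Matrix (Fin d) (Fin d) ℝ) (hΘ : Θ = Hᵀ * R⁻¹ * H)
    (t : ℝ) (ht : 0 ≤ t) :
    ‖exp (-(t • (P * Θ))) - 1‖ ≤ t * ‖P‖ * ‖Θ‖ := by
  have hΘpsd : Θ.PosSemidef := by
    have h1 : (R⁻¹).PosSemidef := hR.inv.posSemidef
    have h2 := h1.conjTranspose_mul_mul_same H
    rw [hΘ]
    simpa using h2
  obtain ⟨Q, hQQ, hQherm⟩ : ∃ Q : Matrix (Fin d) (Fin d) ℝ, Q * Q = P ∧ Qᴴ = Q :=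
    open MatrixOrder in
    ⟨CFC.sqrt P, CFC.sqrt_mul_sqrt_self P hP.nonneg, (CFC.sqrt_nonneg P).posSemidef.1⟩
  have hSpsd : (Q * Θ * Q).PosSemidef := by
    have := hΘpsd.mul_mul_conjTranspose_same Q
    rwa [hQherm] at this
  have hPnorm : ‖Q‖ * ‖Q‖ = ‖P‖ := by
    have h2 : ‖Qᴴ * Q‖ = ‖Q‖ * ‖Q‖ := Matrix.l2_opNorm_conjTranspose_mul_self Q
    rw [hQherm, hQQ] at h2
    exact h2.symm
  have key : ∀ s ∈ Set.Icc (0:ℝ) t,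
      ‖exp (s • (-(P * Θ))) * (-(P * Θ))‖ ≤ ‖P‖ * ‖Θ‖ := by
    intro s hs
    have hPΘQ : (P * Θ) * Q = Q * (Q * Θ * Q) := by
      rw [← hQQ]
      simp only [mul_assoc]
    have hint : (-(s • (P * Θ))) * Q = Q * (-(s • (Q * Θ * Q))) := by
      rw [Matrix.neg_mul, Matrix.smul_mul, hPΘQ, Matrix.mul_neg, mul_smul_comm]
    have hexp := aux_exp_intertwine _ Q _ hint
    have hsmul : s • (-(P * Θ)) = -(s • (P * Θ)) := smul_neg s _
    have hEP : exp (-(s • (P * Θ))) * P = Q * exp (-(s • (Q * Θ * Q))) * Q := by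
      have h3 : exp (-(s • (P * Θ))) * (Q * Q)
          = Q * exp (-(s • (Q * Θ * Q))) * Q := by
        rw [← mul_assoc, hexp]
      rwa [hQQ] at h3
    have hE1 : ‖exp (-(s • (Q * Θ * Q)))‖ ≤ 1 := aux_exp_psd _ hSpsd hs.1
    calc ‖exp (s • (-(P * Θ))) * (-(P * Θ))‖
        = ‖exp (-(s • (P * Θ))) * P * Θ‖ := by
          rw [hsmul, Matrix.mul_neg, norm_neg, mul_assoc]
      _ = ‖Q * exp (-(s • (Q * Θ * Q))) * Q * Θ‖ := by rw [hEP]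
      _ ≤ ‖Q * exp (-(s • (Q * Θ * Q))) * Q‖ * ‖Θ‖ := norm_mul_le _ _
      _ ≤ ‖Q * exp (-(s • (Q * Θ * Q)))‖ * ‖Q‖ * ‖Θ‖ :=
          mul_le_mul_of_nonneg_right (norm_mul_le _ _) (norm_nonneg _)
      _ ≤ ‖Q‖ * ‖exp (-(s • (Q * Θ * Q)))‖ * ‖Q‖ * ‖Θ‖ := by
          apply mul_le_mul_of_nonneg_right _ (norm_nonneg _)
          exact mul_le_mul_of_nonneg_right (norm_mul_le _ _) (norm_nonneg _)
      _ ≤ ‖Q‖ * 1 * ‖Q‖ * ‖Θ‖ := by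
          apply mul_le_mul_of_nonneg_right _ (norm_nonneg _)
          apply mul_le_mul_of_nonneg_right _ (norm_nonneg _)
          exact mul_le_mul_of_nonneg_left hE1 (norm_nonneg _)
      _ = ‖P‖ * ‖Θ‖ := by rw [mul_one, hPnorm]
  have hderiv : ∀ s ∈ Set.Icc (0:ℝ) t,
      HasDerivWithinAt (fun u : ℝ => exp (u • (-(P * Θ))))
        (exp (s • (-(P * Θ))) * (-(P * Θ))) (Set.Icc (0:ℝ) t) s :=
    fun s _ => (hasDerivAt_exp_smul_const (-(P * Θ)) s).hasDerivWithinAt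
  have hmvt := Convex.norm_image_sub_le_of_norm_hasDerivWithin_le hderiv key
    (convex_Icc 0 t) (Set.left_mem_Icc.mpr ht) (Set.right_mem_Icc.mpr ht)
  have h0 : exp ((0:ℝ) • (-(P * Θ))) = 1 := by rw [zero_smul, exp_zero]
  have hT : exp (t • (-(P * Θ))) = exp (-(t • (P * Θ))) := by rw [smul_neg]
  rw [h0, hT, sub_zero, Real.norm_eq_abs, abs_of_nonneg ht] at hmvt
  calc ‖exp (-(t • (P * Θ))) - 1‖ ≤ ‖P‖ * ‖Θ‖ * t := hmvt
    _ = t * ‖P‖ * ‖Θ‖ := by ring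
end

section
/- Define T(P) = (1/√π) ∫₀^∞ t^{-1/2} e^{-t} e^{-tPΘ} dt for symmetric positive semidefinite d×d matrices P, where Θ = Hᵀ R^{-1} H is symmetric positive semidefinite. Then ‖T(P)‖ ≤ 1 + (1/2)‖Θ‖‖P‖ in spectral norm. -/
open Matrix NormedSpace MeasureTheory
open scoped Matrix.Norms.L2Operator

set_option maxHeartbeats 1000000

lemma aux_diag_norm_le_s8 {n : ℕ} (w : Fin n → ℝ) {c : ℝ} (hc : 0 ≤ c) (h : ∀ i, |w i| ≤ c) :
    ‖(Matrix.diagonal w : Matrix (Fin n) (Fin n) ℝ)‖ ≤ c := by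
  rw [Matrix.l2_opNorm_def]
  refine ContinuousLinearMap.opNorm_le_bound _ hc fun x => ?_
  simp only [LinearEquiv.trans_apply, LinearMap.coe_toContinuousLinearMap']
  rw [Matrix.toEuclideanLin_apply]
  rw [EuclideanSpace.norm_eq, EuclideanSpace.norm_eq]
  have h1 : ∀ i ∈ Finset.univ, ‖(WithLp.equiv 2 _).symm (Matrix.diagonal w *ᵥ (WithLp.equiv 2 _) x) i‖ ^ 2
      ≤ c ^ 2 * ‖x i‖ ^ 2 := by
    intro i _
    simp only [WithLp.equiv_symm_apply, WithLp.ofLp_toLp, Matrix.mulVec_diagonal]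
    rw [norm_mul, mul_pow]
    have h2 : ‖w i‖ ^ 2 ≤ c ^ 2 := by
      rw [Real.norm_eq_abs]
      exact pow_le_pow_left₀ (abs_nonneg _) (h i) 2
    have : ‖(WithLp.equiv 2 _) x i‖ = ‖x i‖ := rfl
    rw [this]
    exact mul_le_mul_of_nonneg_right h2 (by positivity)
  calc Real.sqrt (∑ i, ‖(WithLp.equiv 2 _).symm (Matrix.diagonal w *ᵥ (WithLp.equiv 2 _) x) i‖ ^ 2)
      ≤ Real.sqrt (∑ i, c ^ 2 * ‖x i‖ ^ 2) := Real.sqrt_le_sqrt (Finset.sum_le_sum h1)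
    _ = Real.sqrt (c ^ 2 * ∑ i, ‖x i‖ ^ 2) := by rw [Finset.mul_sum]
    _ = c * Real.sqrt (∑ i, ‖x i‖ ^ 2) := by
        rw [Real.sqrt_mul (by positivity), Real.sqrt_sq hc]

lemma aux_norm_one_le {n : ℕ} : ‖(1 : Matrix (Fin n) (Fin n) ℝ)‖ ≤ 1 := by
  rw [Matrix.cstar_norm_def, _root_.map_one]
  exact ContinuousLinearMap.norm_id_le

lemma aux_intertwine {n : ℕ} (x y l : Matrix (Fin n) (Fin n) ℝ) (h : l * x = y * l) :
    l * exp x = exp y * l := by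
  have hpow : ∀ k : ℕ, l * x ^ k = y ^ k * l := by
    intro k; induction k with
    | zero => simp
    | succ k ih => rw [pow_succ, ← mul_assoc, ih, mul_assoc, h, pow_succ, mul_assoc]
  rw [exp_eq_tsum ℝ]
  beta_reduce
  rw [← (NormedSpace.expSeries_summable' (𝕂 := ℝ) x).tsum_mul_left l,
    ← (NormedSpace.expSeries_summable' (𝕂 := ℝ) y).tsum_mul_right l]
  congr 1
  ext k
  rw [mul_smul_comm, smul_mul_assoc, hpow k]

lemma aux_unitary_norm_le {n : ℕ} {U : Matrix (Fin n) (Fin n) ℝ}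
    (hU : U ∈ Matrix.unitaryGroup (Fin n) ℝ) : ‖U‖ ≤ 1 := by
  have h1 : Uᴴ * U = 1 := Matrix.UnitaryGroup.star_mul_self ⟨U, hU⟩
  have h2 : ‖U‖ * ‖U‖ = ‖Uᴴ * U‖ := (Matrix.l2_opNorm_conjTranspose_mul_self U).symm
  rw [h1] at h2
  nlinarith [norm_nonneg U, aux_norm_one_le (n := n)]

lemma aux_exp_psd_norm_le {n : ℕ} {N : Matrix (Fin n) (Fin n) ℝ} (hN : N.PosSemidef)
    {s : ℝ} (hs : s ≤ 0) : ‖exp (s • N)‖ ≤ 1 := by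
  have hH := hN.1
  set U : Matrix (Fin n) (Fin n) ℝ := (Matrix.IsHermitian.eigenvectorUnitary hH : Matrix (Fin n) (Fin n) ℝ) with hUdef
  have hUmem : U ∈ Matrix.unitaryGroup (Fin n) ℝ := (Matrix.IsHermitian.eigenvectorUnitary hH).2
  have hspec := hH.spectral_theorem
  simp only [Unitary.conjStarAlgAut_apply, ← hUdef] at hspec
  have hinv : U⁻¹ = star U := by
    apply Matrix.inv_eq_left_inv
    exact Unitary.star_mul_self_of_mem hUmem
  have hUnit : IsUnit U := by
    refine isUnit_iff_exists.mpr ⟨star U, ?_, ?_⟩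
    · exact Unitary.mul_star_self_of_mem hUmem
    · exact Unitary.star_mul_self_of_mem hUmem
  have hdiag : s • (Matrix.diagonal (RCLike.ofReal ∘ hH.eigenvalues) : Matrix (Fin n) (Fin n) ℝ)
      = Matrix.diagonal (fun i => s * hH.eigenvalues i) := by
    ext i j
    by_cases hij : i = j <;> simp [Matrix.diagonal_apply, hij, RCLike.ofReal]
  have key : exp (s • N) =
      U * Matrix.diagonal (fun i => Real.exp (s * hH.eigenvalues i)) * star U := by
    have h3 : s • N = U * Matrix.diagonal (fun i => s * hH.eigenvalues i) * U⁻¹ := by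
      rw [hinv]
      calc s • N = s • (U * Matrix.diagonal (RCLike.ofReal ∘ hH.eigenvalues) * star U) := by
            rw [← hspec]
        _ = U * (s • Matrix.diagonal (RCLike.ofReal ∘ hH.eigenvalues)) * star U := by
            rw [Matrix.mul_smul, Matrix.smul_mul]
        _ = U * Matrix.diagonal (fun i => s * hH.eigenvalues i) * star U := by rw [hdiag]
    rw [h3, Matrix.exp_conj U _ hUnit, hinv]
    congr 2
    rw [Matrix.exp_diagonal, Pi.exp_def]
    rw [Real.exp_eq_exp_ℝ]
  rw [key]
  have hD : ‖(Matrix.diagonal (fun i => Real.exp (s * hH.eigenvalues i)) : Matrix (Fin n) (Fin n) ℝ)‖ ≤ 1 := by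
    refine aux_diag_norm_le_s8 _ zero_le_one fun i => ?_
    rw [abs_of_pos (Real.exp_pos _)]
    exact Real.exp_le_one_iff.mpr (mul_nonpos_iff.mpr (Or.inr ⟨hs, hN.eigenvalues_nonneg i⟩))
  have hU1 : ‖U‖ ≤ 1 := aux_unitary_norm_le hUmem
  have hsU : ‖star U‖ ≤ 1 := by
    rw [Matrix.star_eq_conjTranspose, Matrix.l2_opNorm_conjTranspose]; exact hU1
  calc ‖U * Matrix.diagonal (fun i => Real.exp (s * hH.eigenvalues i)) * star U‖
      ≤ ‖U * Matrix.diagonal (fun i => Real.exp (s * hH.eigenvalues i))‖ * ‖star U‖ :=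
        norm_mul_le _ _
    _ ≤ (‖U‖ * ‖Matrix.diagonal (fun i => Real.exp (s * hH.eigenvalues i))‖) * ‖star U‖ :=
        mul_le_mul_of_nonneg_right (norm_mul_le _ _) (norm_nonneg _)
    _ ≤ 1 := by
        have h4 : ‖U‖ * ‖(Matrix.diagonal (fun i => Real.exp (s * hH.eigenvalues i)) : Matrix (Fin n) (Fin n) ℝ)‖ ≤ 1 * 1 :=
          mul_le_mul hU1 hD (norm_nonneg _) zero_le_one
        have h5 := mul_le_mul h4 hsU (norm_nonneg _) (by norm_num : (0:ℝ) ≤ 1 * 1)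
        simpa using h5

open scoped MatrixOrder in
lemma aux_key {d : ℕ} {P Θ : Matrix (Fin d) (Fin d) ℝ} (hP : P.PosSemidef)
    (hΘ : Θ.PosSemidef) {t : ℝ} (ht : 0 ≤ t) :
    ‖exp (-(t • (P * Θ)))‖ ≤ 1 + t * (‖Θ‖ * ‖P‖) := by
  set A : Matrix (Fin d) (Fin d) ℝ := P * Θ with hA
  set S : Matrix (Fin d) (Fin d) ℝ := CFC.sqrt P with hS
  have hSS : S * S = P := CFC.sqrt_mul_sqrt_self P hP.nonneg
  have hSH : Sᴴ = S := (CFC.sqrt_nonneg P).posSemidef.1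
  set M : Matrix (Fin d) (Fin d) ℝ := S * Θ * S with hM
  have hMpsd : M.PosSemidef := by
    have := hΘ.conjTranspose_mul_mul_same S
    rwa [hSH] at this
  have hSnorm : ‖S‖ * ‖S‖ = ‖P‖ := by
    have := Matrix.l2_opNorm_conjTranspose_mul_self S
    rw [hSH, hSS] at this
    exact this.symm
  -- derivative bound
  have hbound : ∀ u : ℝ, 0 ≤ u → ‖(-A) * exp (u • (-A))‖ ≤ ‖Θ‖ * ‖P‖ := by
    intro u hu
    have hcomm : A * exp (u • (-A)) = exp (u • (-A)) * A :=
      aux_intertwine _ _ _ (by rw [smul_mul_assoc, mul_smul_comm, neg_mul, mul_neg])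
    have hint : exp (u • (-A)) * S = S * exp (u • (-M)) := by
      refine (aux_intertwine _ _ _ ?_).symm
      rw [smul_mul_assoc, mul_smul_comm]
      congr 1
      rw [neg_mul, mul_neg, neg_inj, hM, hA, ← hSS]
      noncomm_ring
    have heq : (-A) * exp (u • (-A)) = -(S * exp (u • (-M)) * (S * Θ)) := by
      rw [neg_mul, hcomm]
      congr 1
      calc exp (u • (-A)) * A = exp (u • (-A)) * S * (S * Θ) := by
            rw [hA, ← hSS]; noncomm_ring
        _ = S * exp (u • (-M)) * (S * Θ) := by rw [hint]
    rw [heq, norm_neg]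
    have hexp : ‖exp (u • (-M))‖ ≤ 1 := by
      have : u • (-M) = (-u) • M := by rw [neg_smul, smul_neg]
      rw [this]
      exact aux_exp_psd_norm_le hMpsd (neg_nonpos.mpr hu)
    calc ‖S * exp (u • (-M)) * (S * Θ)‖
        ≤ ‖S * exp (u • (-M))‖ * ‖S * Θ‖ := norm_mul_le _ _
      _ ≤ (‖S‖ * ‖exp (u • (-M))‖) * (‖S‖ * ‖Θ‖) := by
          refine mul_le_mul (norm_mul_le _ _) (norm_mul_le _ _) (norm_nonneg _) ?_
          positivity
      _ ≤ (‖S‖ * 1) * (‖S‖ * ‖Θ‖) := by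
          refine mul_le_mul_of_nonneg_right ?_ (by positivity)
          exact mul_le_mul_of_nonneg_left hexp (norm_nonneg _)
      _ = ‖Θ‖ * ‖P‖ := by rw [mul_one, ← hSnorm]; ring
  -- FTC / mean value bound
  have hderiv : ∀ u ∈ Set.Icc (0:ℝ) t,
      HasDerivWithinAt (fun v : ℝ => exp (v • (-A))) ((-A) * exp (u • (-A))) (Set.Icc 0 t) u :=
    fun u _ => (hasDerivAt_exp_smul_const' (-A) u).hasDerivWithinAt
  have hmvt := Convex.norm_image_sub_le_of_norm_hasDerivWithin_le hderiv
    (fun u hu => hbound u hu.1) (convex_Icc 0 t) (Set.left_mem_Icc.mpr ht)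
    (Set.right_mem_Icc.mpr ht)
  simp only [zero_smul, exp_zero, sub_zero] at hmvt
  have h0 : exp (t • (-A)) = exp (-(t • A)) := by rw [smul_neg]
  calc ‖exp (-(t • A))‖ ≤ ‖(1 : Matrix (Fin d) (Fin d) ℝ)‖ + ‖exp (-(t • A)) - 1‖ := by
        have := norm_add_le (1 : Matrix (Fin d) (Fin d) ℝ) (exp (-(t • A)) - 1)
        simpa using this
    _ ≤ 1 + t * (‖Θ‖ * ‖P‖) := by
        refine add_le_add aux_norm_one_le ?_
        rw [← h0]
        calc ‖exp (t • (-A)) - 1‖ ≤ (‖Θ‖ * ‖P‖) * ‖t‖ := hmvt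
          _ = t * (‖Θ‖ * ‖P‖) := by rw [Real.norm_eq_abs, abs_of_nonneg ht]; ring

/-- With `T(P) = (1/√π) ∫₀^∞ t^{-1/2} e^{-t} e^{-tPΘ} dt` and `Θ = Hᵀ R⁻¹ H`,
one has `‖T(P)‖ ≤ 1 + (1/2) ‖Θ‖ ‖P‖` in spectral norm. -/
theorem stmt_8 {d q : ℕ} (P : Matrix (Fin d) (Fin d) ℝ) (hP : P.PosSemidef)
    (H : Matrix (Fin q) (Fin d) ℝ) (R : Matrix (Fin q) (Fin q) ℝ) (hR : R.PosDef)
    (Θ : Matrix (Fin d) (Fin d) ℝ) (hΘ : Θ = Hᵀ * R⁻¹ * H) :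
    ‖(Real.sqrt Real.pi)⁻¹ •
        ∫ t in Set.Ioi (0 : ℝ),
          ((Real.sqrt t)⁻¹ * Real.exp (-t)) • exp (-(t • (P * Θ)))‖ ≤
      1 + (1 / 2) * ‖Θ‖ * ‖P‖ := by
  have hΘpsd : Θ.PosSemidef := by
    rw [hΘ, ← Matrix.conjTranspose_eq_transpose_of_trivial]
    exact (hR.posSemidef.inv).conjTranspose_mul_mul_same H
  set c : ℝ := ‖Θ‖ * ‖P‖ with hc
  have hc0 : 0 ≤ c := mul_nonneg (norm_nonneg _) (norm_nonneg _)
  -- the scalar dominating function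
  set g1 : ℝ → ℝ := fun x => Real.exp (-x) * x ^ ((1:ℝ)/2 - 1) with hg1def
  set g2 : ℝ → ℝ := fun x => Real.exp (-x) * x ^ ((3:ℝ)/2 - 1) with hg2def
  have hg1 : IntegrableOn g1 (Set.Ioi 0) := Real.GammaIntegral_convergent (by norm_num)
  have hg2 : IntegrableOn g2 (Set.Ioi 0) := Real.GammaIntegral_convergent (by norm_num)
  have hgint : IntegrableOn (fun x => g1 x + c * g2 x) (Set.Ioi 0) :=
    hg1.add (hg2.const_mul c)
  -- pointwise bound
  have hbound : ∀ t ∈ Set.Ioi (0:ℝ),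
      ‖((Real.sqrt t)⁻¹ * Real.exp (-t)) • exp (-(t • (P * Θ)))‖ ≤ g1 t + c * g2 t := by
    intro t htpos
    rw [Set.mem_Ioi] at htpos
    have hid1 : (Real.sqrt t)⁻¹ = t ^ ((1:ℝ)/2 - 1) := by
      rw [Real.sqrt_eq_rpow, show ((1:ℝ)/2 - 1) = -(1/2) by norm_num,
        Real.rpow_neg htpos.le]
    have hid2 : (Real.sqrt t)⁻¹ * t = t ^ ((3:ℝ)/2 - 1) := by
      rw [hid1, show ((1:ℝ)/2 - 1) = -(1/2) by norm_num]
      rw [show ((3:ℝ)/2 - 1) = -(1/2) + 1 by norm_num, Real.rpow_add htpos, Real.rpow_one]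
    rw [norm_smul]
    have hsn : ‖(Real.sqrt t)⁻¹ * Real.exp (-t)‖ = (Real.sqrt t)⁻¹ * Real.exp (-t) := by
      rw [Real.norm_eq_abs, abs_of_nonneg]
      positivity
    rw [hsn]
    calc (Real.sqrt t)⁻¹ * Real.exp (-t) * ‖exp (-(t • (P * Θ)))‖
        ≤ (Real.sqrt t)⁻¹ * Real.exp (-t) * (1 + t * c) := by
          refine mul_le_mul_of_nonneg_left (aux_key hP hΘpsd htpos.le) ?_
          positivity
      _ = g1 t + c * g2 t := by
          rw [hg1def, hg2def]
          simp only
          rw [← hid1, ← hid2]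
          ring
  have hnorm_int : ‖∫ t in Set.Ioi (0:ℝ),
      ((Real.sqrt t)⁻¹ * Real.exp (-t)) • exp (-(t • (P * Θ)))‖
      ≤ ∫ t in Set.Ioi (0:ℝ), (g1 t + c * g2 t) :=
    MeasureTheory.norm_integral_le_of_norm_le hgint
      (ae_restrict_of_forall_mem measurableSet_Ioi hbound)
  -- compute the scalar integral
  have hI1 : ∫ t in Set.Ioi (0:ℝ), g1 t = Real.sqrt Real.pi := by
    rw [hg1def, ← Real.Gamma_eq_integral (by norm_num : (0:ℝ) < 1/2), Real.Gamma_one_half_eq]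
  have hI2 : ∫ t in Set.Ioi (0:ℝ), g2 t = Real.sqrt Real.pi / 2 := by
    rw [hg2def, ← Real.Gamma_eq_integral (by norm_num : (0:ℝ) < 3/2)]
    rw [show (3:ℝ)/2 = 1/2 + 1 by norm_num, Real.Gamma_add_one (by norm_num),
      Real.Gamma_one_half_eq]
    ring
  have hIg : ∫ t in Set.Ioi (0:ℝ), (g1 t + c * g2 t)
      = Real.sqrt Real.pi * (1 + c / 2) := by
    rw [MeasureTheory.integral_add hg1 (hg2.const_mul c),
      MeasureTheory.integral_const_mul, hI1, hI2]
    ring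
  have hpi : 0 < Real.sqrt Real.pi := Real.sqrt_pos.mpr Real.pi_pos
  rw [norm_smul, Real.norm_eq_abs, abs_of_pos (inv_pos.mpr hpi)]
  calc (Real.sqrt Real.pi)⁻¹ * ‖∫ t in Set.Ioi (0:ℝ),
        ((Real.sqrt t)⁻¹ * Real.exp (-t)) • exp (-(t • (P * Θ)))‖
      ≤ (Real.sqrt Real.pi)⁻¹ * (Real.sqrt Real.pi * (1 + c / 2)) := by
        refine mul_le_mul_of_nonneg_left ?_ (inv_nonneg.mpr hpi.le)
        rw [← hIg]; exact hnorm_int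
    _ = 1 + c / 2 := by
        rw [← mul_assoc, inv_mul_cancel₀ hpi.ne', one_mul]
    _ = 1 + (1 / 2) * ‖Θ‖ * ‖P‖ := by rw [hc]; ring
end

section
/- Lipschitz-type estimate for the square-root transformation: with T(P) = (1/√π) ∫₀^∞ t^{-1/2} e^{-t} e^{-tPΘ} dt and Θ = Hᵀ R^{-1} H symmetric positive semidefinite, there exists a constant C (depending only on Θ) such that ‖T(P) - T(Q)‖ ≤ C (1 + ‖P‖² + ‖Q‖²)(1 + ‖Θ‖³) ‖P - Q‖ for all symmetric positive semidefinite P, Q. -/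
set_option maxHeartbeats 1000000
open Matrix NormedSpace MeasureTheory
open scoped Matrix.Norms.L2Operator RealInnerProductSpace

variable {d : ℕ}

lemma aux_semiconj (A B : Matrix (Fin d) (Fin d) ℝ) :
    A * exp (B * A) = exp (A * B) * A := by
  rw [exp_eq_tsum ℝ]
  beta_reduce
  rw [← (expSeries_summable' (𝕂 := ℝ) (B * A)).tsum_mul_left A,
    ← (expSeries_summable' (𝕂 := ℝ) (A * B)).tsum_mul_right A]
  congr 1
  funext n
  have h : SemiconjBy A (B * A) (A * B) := by simp [SemiconjBy, mul_assoc]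
  rw [mul_smul_comm, smul_mul_assoc, (h.pow_right n).eq]

lemma psd_inner_nonneg {M : Matrix (Fin d) (Fin d) ℝ} (hM : M.PosSemidef)
    (z : EuclideanSpace ℝ (Fin d)) :
    0 ≤ ⟪toEuclideanCLM (𝕜 := ℝ) M z, z⟫ := by
  have h := hM.dotProduct_mulVec_nonneg (WithLp.equiv _ _ z)
  rw [EuclideanSpace.inner_eq_star_dotProduct]
  simpa [dotProduct_comm, Matrix.toLin'_apply] using h

lemma exp_neg_psd_apply_norm_le {M : Matrix (Fin d) (Fin d) ℝ} (hM : M.PosSemidef)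
    {u : ℝ} (hu : 0 ≤ u) (x : EuclideanSpace ℝ (Fin d)) :
    ‖toEuclideanCLM (𝕜 := ℝ) (exp (u • (-M))) x‖ ≤ ‖x‖ := by
  classical
  set L : Matrix (Fin d) (Fin d) ℝ →ₗ[ℝ] EuclideanSpace ℝ (Fin d) :=
    { toFun := fun A => toEuclideanCLM (𝕜 := ℝ) A x
      map_add' := by intro A B; simp
      map_smul' := by intro c A; simp } with hL
  set Lc := LinearMap.toContinuousLinearMap L with hLc
  have hLc_apply : ∀ A, Lc A = toEuclideanCLM (𝕜 := ℝ) A x := fun A => rfl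
  set y : ℝ → EuclideanSpace ℝ (Fin d) := fun v => Lc (exp (v • (-M))) with hy
  set φ : ℝ → ℝ := fun v => ⟪y v, y v⟫ with hφ
  have hyd : ∀ v : ℝ, HasDerivAt y (-(toEuclideanCLM (𝕜 := ℝ) M (y v))) v := by
    intro v
    have h1 : HasDerivAt (fun w : ℝ => exp (w • (-M))) (exp (v • (-M)) * (-M)) v :=
      hasDerivAt_exp_smul_const (-M) v
    have h2 := Lc.hasFDerivAt.comp_hasDerivAt v h1
    have hcomm : exp (v • (-M)) * (-M) = -(M * exp (v • (-M))) := by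
      have hc : Commute M (v • (-M)) := ((Commute.refl M).neg_right).smul_right v
      have := (hc.exp_right).eq
      rw [mul_neg, ← this]
    rw [hcomm] at h2
    have h3 : Lc (-(M * exp (v • (-M)))) = -(toEuclideanCLM (𝕜 := ℝ) M (y v)) := by
      rw [map_neg, hLc_apply, _root_.map_mul]
      rfl
    rw [h3] at h2
    exact h2
  have hφd : ∀ v : ℝ, HasDerivAt φ
      (⟪y v, -(toEuclideanCLM (𝕜 := ℝ) M (y v))⟫ + ⟪-(toEuclideanCLM (𝕜 := ℝ) M (y v)), y v⟫) v :=
    fun v => (hyd v).inner ℝ (hyd v)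
  have hanti : Antitone φ := by
    apply antitone_of_deriv_nonpos
    · exact fun v => ((hφd v).differentiableAt)
    · intro v
      rw [(hφd v).deriv]
      have h0 := psd_inner_nonneg hM (y v)
      have : ⟪toEuclideanCLM (𝕜 := ℝ) M (y v), y v⟫ = ⟪y v, toEuclideanCLM (𝕜 := ℝ) M (y v)⟫ :=
        real_inner_comm _ _
      simp only [inner_neg_right, inner_neg_left]
      linarith [this]
  have h0 : φ 0 = ‖x‖ ^ 2 := by
    simp only [hφ, hy, zero_smul, exp_zero, hLc_apply, _root_.map_one]
    rw [real_inner_self_eq_norm_sq, ContinuousLinearMap.one_apply]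
  have hu2 : φ u ≤ ‖x‖ ^ 2 := h0 ▸ hanti hu
  have hyu : φ u = ‖y u‖ ^ 2 := real_inner_self_eq_norm_sq _
  rw [hyu] at hu2
  have hgoal : toEuclideanCLM (𝕜 := ℝ) (exp (u • (-M))) x = y u := (hLc_apply _).symm
  rw [hgoal]
  nlinarith [norm_nonneg (y u), norm_nonneg x]


lemma exp_neg_psd_norm_le_one {M : Matrix (Fin d) (Fin d) ℝ} (hM : M.PosSemidef)
    {u : ℝ} (hu : 0 ≤ u) : ‖exp (u • (-M))‖ ≤ 1 := by
  rw [Matrix.cstar_norm_def]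
  refine ContinuousLinearMap.opNorm_le_bound _ zero_le_one fun x => ?_
  rw [one_mul]
  exact exp_neg_psd_apply_norm_le hM hu x

lemma matrix_norm_one_le : ‖(1 : Matrix (Fin d) (Fin d) ℝ)‖ ≤ 1 := by
  rw [Matrix.cstar_norm_def, _root_.map_one]
  exact ContinuousLinearMap.norm_id_le

-- L3
lemma theta_exp_norm_le {P Θ : Matrix (Fin d) (Fin d) ℝ} (hP : P.PosSemidef)
    (hΘ : Θ.PosSemidef) {u : ℝ} (hu : 0 ≤ u) :
    ‖Θ * exp (u • (-(P * Θ)))‖ ≤ ‖Θ‖ := by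
  obtain ⟨W, hWpsd, hWW⟩ : ∃ W : Matrix (Fin d) (Fin d) ℝ, W.PosSemidef ∧ W * W = Θ :=
    open scoped MatrixOrder in
      ⟨CFC.sqrt Θ, (CFC.sqrt_nonneg Θ).posSemidef, CFC.sqrt_mul_sqrt_self Θ hΘ.nonneg⟩
  have key : Θ * exp (u • (-(P * Θ))) = W * exp (u • (-(W * P * W))) * W := by
    have h1 : u • (-(P * Θ)) = ((-(u • P)) * W) * W := by
      rw [← hWW]
      simp only [Matrix.neg_mul, smul_neg, Matrix.smul_mul, mul_assoc]
    have h2 : W * exp (((-(u • P)) * W) * W) = exp (W * ((-(u • P)) * W)) * W :=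
      aux_semiconj W ((-(u • P)) * W)
    have h3 : W * (W * exp (((-(u • P)) * W) * W)) = W * (exp (W * ((-(u • P)) * W)) * W) := by
      rw [h2]
    have h4 : W * ((-(u • P)) * W) = u • (-(W * P * W)) := by
      simp only [Matrix.neg_mul, Matrix.mul_neg, smul_neg, Matrix.smul_mul, Matrix.mul_smul,
        mul_assoc]
    rw [h1, ← hWW, mul_assoc W W _, h3, h4, ← mul_assoc]
  rw [key]
  have hWPW : (W * P * W).PosSemidef := by
    have hWt : Wᵀ = W := by
      have := hWpsd.1.eq
      simpa using this
    have := hP.conjTranspose_mul_mul_same W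
    simpa [hWt] using this
  calc ‖W * exp (u • (-(W * P * W))) * W‖
      ≤ ‖W * exp (u • (-(W * P * W)))‖ * ‖W‖ := Matrix.l2_opNorm_mul _ _
    _ ≤ ‖W‖ * ‖exp (u • (-(W * P * W)))‖ * ‖W‖ := by
        apply mul_le_mul_of_nonneg_right (Matrix.l2_opNorm_mul _ _) (norm_nonneg _)
    _ ≤ ‖W‖ * 1 * ‖W‖ := by
        apply mul_le_mul_of_nonneg_right _ (norm_nonneg _)
        exact mul_le_mul_of_nonneg_left (exp_neg_psd_norm_le_one hWPW hu) (norm_nonneg _)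
    _ = ‖W‖ * ‖W‖ := by ring
    _ = ‖Θ‖ := by
        rw [← Matrix.l2_opNorm_conjTranspose_mul_self W]
        congr 1
        rw [show Wᴴ = W from hWpsd.1.eq, hWW]

-- L4
lemma exp_neg_norm_le {P Θ : Matrix (Fin d) (Fin d) ℝ} (hP : P.PosSemidef)
    (hΘ : Θ.PosSemidef) {s : ℝ} (hs : 0 ≤ s) :
    ‖exp (s • (-(P * Θ)))‖ ≤ 1 + s * (‖P‖ * ‖Θ‖) := by
  have hmvt : ‖exp (s • (-(P * Θ))) - exp ((0:ℝ) • (-(P * Θ)))‖ ≤ (‖P‖ * ‖Θ‖) * ‖s - 0‖ := by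
    refine Convex.norm_image_sub_le_of_norm_hasDerivWithin_le
      (f := fun u : ℝ => exp (u • (-(P * Θ))))
      (f' := fun u : ℝ => (-(P * Θ)) * exp (u • (-(P * Θ))))
      (fun u hu => (hasDerivAt_exp_smul_const' (-(P * Θ)) u).hasDerivWithinAt)
      (fun u hu => ?_) (convex_Icc 0 s) (Set.left_mem_Icc.mpr hs) (Set.right_mem_Icc.mpr hs)
    beta_reduce
    have heq : (-(P * Θ)) * exp (u • (-(P * Θ))) = -(P * (Θ * exp (u • (-(P * Θ))))) := by
      simp [Matrix.neg_mul, mul_assoc]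
    rw [heq, norm_neg]
    calc ‖P * (Θ * exp (u • (-(P * Θ))))‖ ≤ ‖P‖ * ‖Θ * exp (u • (-(P * Θ)))‖ :=
          Matrix.l2_opNorm_mul _ _
      _ ≤ ‖P‖ * ‖Θ‖ := mul_le_mul_of_nonneg_left (theta_exp_norm_le hP hΘ hu.1) (norm_nonneg _)
  rw [zero_smul, exp_zero, sub_zero] at hmvt
  have h1 : ‖exp (s • (-(P * Θ)))‖ ≤ ‖exp (s • (-(P * Θ))) - 1‖ + ‖(1 : Matrix (Fin d) (Fin d) ℝ)‖ := by
    have := norm_add_le (exp (s • (-(P * Θ))) - 1) 1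
    simpa using this
  have hsn : ‖s‖ = s := Real.norm_of_nonneg hs
  calc ‖exp (s • (-(P * Θ)))‖ ≤ (‖P‖ * ‖Θ‖) * s + 1 := by
        rw [hsn] at hmvt
        linarith [matrix_norm_one_le (d := d)]
    _ = 1 + s * (‖P‖ * ‖Θ‖) := by ring

-- L5 : Duhamel-type bound
lemma exp_diff_norm_le {P Q Θ : Matrix (Fin d) (Fin d) ℝ} (hP : P.PosSemidef)
    (hQ : Q.PosSemidef) (hΘ : Θ.PosSemidef) {t : ℝ} (ht : 0 ≤ t) :
    ‖exp (-(t • (P * Θ))) - exp (-(t • (Q * Θ)))‖ ≤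
      ((1 + t * (‖P‖ * ‖Θ‖)) * (‖P - Q‖ * ‖Θ‖)) * t := by
  set A := P * Θ with hA
  set B := Q * Θ with hB
  set g : ℝ → Matrix (Fin d) (Fin d) ℝ :=
    fun s => exp (s • (-A)) * exp ((t - s) • (-B)) with hg
  have hderiv : ∀ s : ℝ, HasDerivAt g
      (exp (s • (-A)) * (((Q - P) * Θ) * exp ((t - s) • (-B)))) s := by
    intro s
    have h1 : HasDerivAt (fun u : ℝ => exp (u • (-A))) (exp (s • (-A)) * (-A)) s :=
      hasDerivAt_exp_smul_const (-A) s
    have hinner : HasDerivAt (fun u : ℝ => t - u) (-1 : ℝ) s := by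
      simpa using (hasDerivAt_id s).const_sub t
    have houter : HasDerivAt (fun w : ℝ => exp (w • (-B))) ((-B) * exp ((t - s) • (-B))) (t - s) :=
      hasDerivAt_exp_smul_const' (-B) (t - s)
    have h2 : HasDerivAt (fun u : ℝ => exp ((t - u) • (-B)))
        ((-1 : ℝ) • ((-B) * exp ((t - s) • (-B)))) s :=
      HasDerivAt.scomp s houter hinner
    have h3 := h1.mul h2
    have heq : exp (s • (-A)) * (-A) * exp ((t - s) • (-B)) +
        exp (s • (-A)) * ((-1 : ℝ) • ((-B) * exp ((t - s) • (-B)))) =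
        exp (s • (-A)) * (((Q - P) * Θ) * exp ((t - s) • (-B))) := by
      rw [neg_one_smul, Matrix.neg_mul, neg_neg, mul_assoc, ← Matrix.mul_add, ← Matrix.add_mul]
      congr 2
      rw [hA, hB, Matrix.sub_mul]
      abel
    rw [heq] at h3
    exact h3
  have hbound : ∀ s ∈ Set.Icc (0:ℝ) t,
      ‖exp (s • (-A)) * (((Q - P) * Θ) * exp ((t - s) • (-B)))‖ ≤
        (1 + t * (‖P‖ * ‖Θ‖)) * (‖P - Q‖ * ‖Θ‖) := by
    intro s hs
    have hE1 : ‖exp (s • (-A))‖ ≤ 1 + t * (‖P‖ * ‖Θ‖) := by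
      refine le_trans (exp_neg_norm_le hP hΘ hs.1) ?_
      have : s * (‖P‖ * ‖Θ‖) ≤ t * (‖P‖ * ‖Θ‖) :=
        mul_le_mul_of_nonneg_right hs.2 (mul_nonneg (norm_nonneg _) (norm_nonneg _))
      linarith
    have hE2 : ‖((Q - P) * Θ) * exp ((t - s) • (-B))‖ ≤ ‖P - Q‖ * ‖Θ‖ := by
      have hgrp : ((Q - P) * Θ) * exp ((t - s) • (-B)) =
          (Q - P) * (Θ * exp ((t - s) • (-B))) := by rw [mul_assoc]
      rw [hgrp]
      calc ‖(Q - P) * (Θ * exp ((t - s) • (-B)))‖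
          ≤ ‖Q - P‖ * ‖Θ * exp ((t - s) • (-B))‖ := Matrix.l2_opNorm_mul _ _
        _ ≤ ‖P - Q‖ * ‖Θ‖ := by
            rw [norm_sub_rev Q P]
            exact mul_le_mul_of_nonneg_left (theta_exp_norm_le hQ hΘ (by linarith [hs.2])) (norm_nonneg _)
    calc ‖exp (s • (-A)) * (((Q - P) * Θ) * exp ((t - s) • (-B)))‖
        ≤ ‖exp (s • (-A))‖ * ‖((Q - P) * Θ) * exp ((t - s) • (-B))‖ := Matrix.l2_opNorm_mul _ _
      _ ≤ (1 + t * (‖P‖ * ‖Θ‖)) * (‖P - Q‖ * ‖Θ‖) := by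
          apply mul_le_mul hE1 hE2 (norm_nonneg _)
          positivity
  have hmvt : ‖g t - g 0‖ ≤ ((1 + t * (‖P‖ * ‖Θ‖)) * (‖P - Q‖ * ‖Θ‖)) * ‖t - 0‖ :=
    Convex.norm_image_sub_le_of_norm_hasDerivWithin_le
      (fun s hs => (hderiv s).hasDerivWithinAt) hbound (convex_Icc 0 t)
      (Set.left_mem_Icc.mpr ht) (Set.right_mem_Icc.mpr ht)
  have hgt : g t = exp (-(t • A)) := by
    rw [hg]; beta_reduce
    rw [sub_self, zero_smul, exp_zero, mul_one, smul_neg]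
  have hg0 : g 0 = exp (-(t • B)) := by
    rw [hg]; beta_reduce
    rw [zero_smul, exp_zero, one_mul, sub_zero, smul_neg]
  rw [hgt, hg0, sub_zero, Real.norm_of_nonneg ht] at hmvt
  exact hmvt

lemma sqrt_inv_eq_rpow {t : ℝ} (ht : 0 < t) : (Real.sqrt t)⁻¹ = t ^ ((1/2 : ℝ) - 1) := by
  rw [Real.sqrt_eq_rpow, ← Real.rpow_neg ht.le]
  norm_num

lemma sqrt_eq_rpow' {t : ℝ} (ht : 0 < t) : Real.sqrt t = t ^ ((3/2 : ℝ) - 1) := by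
  rw [Real.sqrt_eq_rpow]; norm_num

lemma t_mul_sqrt_eq_rpow {t : ℝ} (ht : 0 < t) : Real.sqrt t * t = t ^ ((5/2 : ℝ) - 1) := by
  rw [show (5/2:ℝ) - 1 = 1/2 + 1 by norm_num, Real.rpow_add ht, Real.rpow_one,
    Real.sqrt_eq_rpow]

-- continuity of the integrand
lemma fP_contOn (P Θ : Matrix (Fin d) (Fin d) ℝ) :
    ContinuousOn (fun t : ℝ => ((Real.sqrt t)⁻¹ * Real.exp (-t)) • exp (-(t • (P * Θ))))
      (Set.Ioi 0) := by
  apply ContinuousOn.fun_smul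
  · apply ContinuousOn.mul
    · exact (Real.continuous_sqrt.continuousOn).inv₀ fun t ht =>
        (Real.sqrt_pos.mpr (Set.mem_Ioi.mp ht)).ne'
    · exact (Real.continuous_exp.comp continuous_neg).continuousOn
  · exact ((show Continuous (exp : Matrix (Fin d) (Fin d) ℝ → _) by
      rw [← continuousOn_univ, ← Metric.eball_top_eq_univ (0 : Matrix (Fin d) (Fin d) ℝ),
        ← expSeries_radius_eq_top ℝ (Matrix (Fin d) (Fin d) ℝ)]
      exact continuousOn_exp).comp
      ((continuous_id.smul continuous_const).neg)).continuousOn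

lemma fP_integrableOn {P Θ : Matrix (Fin d) (Fin d) ℝ} (hP : P.PosSemidef) (hΘ : Θ.PosSemidef) :
    IntegrableOn (fun t : ℝ => ((Real.sqrt t)⁻¹ * Real.exp (-t)) • exp (-(t • (P * Θ))))
      (Set.Ioi 0) := by
  set c := 1 + ‖P‖ * ‖Θ‖ with hc
  have hc0 : 0 ≤ c := by positivity
  have hg : IntegrableOn (fun t : ℝ =>
      c * (Real.exp (-t) * t ^ ((1/2 : ℝ) - 1) + Real.exp (-t) * t ^ ((3/2 : ℝ) - 1)))
      (Set.Ioi 0) := by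
    exact (((Real.GammaIntegral_convergent (by norm_num : (0:ℝ) < 1/2)).add
      (Real.GammaIntegral_convergent (by norm_num : (0:ℝ) < 3/2))).const_mul c)
  refine Integrable.mono' hg
    ((fP_contOn P Θ).aestronglyMeasurable measurableSet_Ioi) ?_
  rw [ae_restrict_iff' measurableSet_Ioi]
  refine ae_of_all _ fun t ht => ?_
  have ht0 : (0:ℝ) < t := Set.mem_Ioi.mp ht
  rw [norm_smul]
  have hsc : ‖(Real.sqrt t)⁻¹ * Real.exp (-t)‖ = (Real.sqrt t)⁻¹ * Real.exp (-t) := by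
    rw [Real.norm_of_nonneg]
    positivity
  rw [hsc]
  have hexp : ‖exp (-(t • (P * Θ)))‖ ≤ 1 + t * (‖P‖ * ‖Θ‖) := by
    rw [show -(t • (P * Θ)) = t • (-(P * Θ)) by rw [smul_neg]]
    exact exp_neg_norm_le hP hΘ ht0.le
  calc (Real.sqrt t)⁻¹ * Real.exp (-t) * ‖exp (-(t • (P * Θ)))‖
      ≤ (Real.sqrt t)⁻¹ * Real.exp (-t) * (1 + t * (‖P‖ * ‖Θ‖)) := by
        apply mul_le_mul_of_nonneg_left hexp
        positivity
    _ ≤ (Real.sqrt t)⁻¹ * Real.exp (-t) * (c * (1 + t)) := by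
        apply mul_le_mul_of_nonneg_left _ (by positivity)
        rw [hc]
        nlinarith [norm_nonneg P, norm_nonneg Θ, ht0.le,
          mul_nonneg (norm_nonneg P) (norm_nonneg Θ)]
    _ = c * (Real.exp (-t) * (Real.sqrt t)⁻¹ + Real.exp (-t) * ((Real.sqrt t)⁻¹ * t)) := by ring
    _ = c * (Real.exp (-t) * t ^ ((1/2 : ℝ) - 1) + Real.exp (-t) * t ^ ((3/2 : ℝ) - 1)) := by
        have h1 : (Real.sqrt t)⁻¹ * t = Real.sqrt t := by
          rw [show (Real.sqrt t)⁻¹ * t = t / Real.sqrt t by ring, Real.div_sqrt]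
        rw [h1, sqrt_inv_eq_rpow ht0, sqrt_eq_rpow' ht0]

/-- Lipschitz-type estimate for the square-root transformation
`T(P) = (1/√π) ∫₀^∞ t^{-1/2} e^{-t} e^{-tPΘ} dt`: there is a constant `C` (depending
only on `Θ`) such that `‖T(P) - T(Q)‖ ≤ C (1 + ‖P‖² + ‖Q‖²)(1 + ‖Θ‖³) ‖P - Q‖` for all
symmetric positive semidefinite `P`, `Q`. -/
theorem stmt_10 {d q : ℕ} (H : Matrix (Fin q) (Fin d) ℝ)
    (R : Matrix (Fin q) (Fin q) ℝ) (hR : R.PosDef)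
    (Θ : Matrix (Fin d) (Fin d) ℝ) (hΘ : Θ = Hᵀ * R⁻¹ * H)
    (T : Matrix (Fin d) (Fin d) ℝ → Matrix (Fin d) (Fin d) ℝ)
    (hT : ∀ P, T P = (Real.sqrt Real.pi)⁻¹ •
      ∫ t in Set.Ioi (0 : ℝ),
        ((Real.sqrt t)⁻¹ * Real.exp (-t)) • exp (-(t • (P * Θ)))) :
    ∃ C : ℝ, ∀ P Q : Matrix (Fin d) (Fin d) ℝ, P.PosSemidef → Q.PosSemidef →
      ‖T P - T Q‖ ≤ C * (1 + ‖P‖ ^ 2 + ‖Q‖ ^ 2) * (1 + ‖Θ‖ ^ 3) * ‖P - Q‖ := by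
  have hΘpsd : Θ.PosSemidef := by
    rw [hΘ]
    have h1 : (R⁻¹).PosSemidef := hR.inv.posSemidef
    have h2 := h1.conjTranspose_mul_mul_same H
    simpa using h2
  set s : ℝ := (Real.sqrt Real.pi)⁻¹ with hs
  have hs0 : 0 ≤ s := by positivity
  set g : ℝ → ℝ := fun t =>
    Real.exp (-t) * t ^ ((3/2 : ℝ) - 1) + Real.exp (-t) * t ^ ((5/2 : ℝ) - 1) with hgdef
  have hgint : IntegrableOn g (Set.Ioi 0) :=
    (Real.GammaIntegral_convergent (by norm_num : (0:ℝ) < 3/2)).add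
      (Real.GammaIntegral_convergent (by norm_num : (0:ℝ) < 5/2))
  set K : ℝ := ∫ t in Set.Ioi (0:ℝ), g t with hK
  have hK0 : 0 ≤ K := by
    apply setIntegral_nonneg measurableSet_Ioi
    intro t ht
    have ht0 : (0:ℝ) < t := ht
    have : (0:ℝ) < Real.exp (-t) := Real.exp_pos _
    positivity
  refine ⟨s * K * 3, fun P Q hP hQ => ?_⟩
  set a := ‖P‖ with ha
  set b := ‖Q‖ with hb
  set θ := ‖Θ‖ with hθn
  set D := ‖P - Q‖ with hD
  have ha0 : 0 ≤ a := norm_nonneg _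
  have hb0 : 0 ≤ b := norm_nonneg _
  have hθ0 : 0 ≤ θ := norm_nonneg _
  have hD0 : 0 ≤ D := norm_nonneg _
  set fP : ℝ → Matrix (Fin d) (Fin d) ℝ :=
    fun t => ((Real.sqrt t)⁻¹ * Real.exp (-t)) • exp (-(t • (P * Θ))) with hfP
  set fQ : ℝ → Matrix (Fin d) (Fin d) ℝ :=
    fun t => ((Real.sqrt t)⁻¹ * Real.exp (-t)) • exp (-(t • (Q * Θ))) with hfQ
  have hfPint : IntegrableOn fP (Set.Ioi 0) := fP_integrableOn hP hΘpsd
  have hfQint : IntegrableOn fQ (Set.Ioi 0) := fP_integrableOn hQ hΘpsd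
  have hsplit : T P - T Q = s • ∫ t in Set.Ioi (0:ℝ), (fP t - fQ t) := by
    rw [hT P, hT Q, ← smul_sub]
    congr 1
    rw [integral_sub hfPint hfQint]
  -- pointwise bound on the difference
  have hptwise : ∀ t ∈ Set.Ioi (0:ℝ), ‖fP t - fQ t‖ ≤ (D * θ * (1 + a * θ)) * g t := by
    intro t ht
    have ht0 : (0:ℝ) < t := ht
    have hcs : (0:ℝ) ≤ (Real.sqrt t)⁻¹ * Real.exp (-t) := by positivity
    have hdiffexp : ‖exp (-(t • (P * Θ))) - exp (-(t • (Q * Θ)))‖ ≤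
        ((1 + t * (a * θ)) * (D * θ)) * t := exp_diff_norm_le hP hQ hΘpsd ht0.le
    have heq : fP t - fQ t = ((Real.sqrt t)⁻¹ * Real.exp (-t)) •
        (exp (-(t • (P * Θ))) - exp (-(t • (Q * Θ)))) := by
      rw [smul_sub]
    rw [heq, norm_smul, Real.norm_of_nonneg hcs]
    have hst : (Real.sqrt t)⁻¹ * t = Real.sqrt t := by
      rw [show (Real.sqrt t)⁻¹ * t = t / Real.sqrt t by ring, Real.div_sqrt]
    calc ((Real.sqrt t)⁻¹ * Real.exp (-t)) * ‖exp (-(t • (P * Θ))) - exp (-(t • (Q * Θ)))‖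
        ≤ ((Real.sqrt t)⁻¹ * Real.exp (-t)) * (((1 + t * (a * θ)) * (D * θ)) * t) :=
          mul_le_mul_of_nonneg_left hdiffexp hcs
      _ = (D * θ) * ((1 + t * (a * θ)) * (Real.exp (-t) * ((Real.sqrt t)⁻¹ * t))) := by ring
      _ = (D * θ) * ((1 + t * (a * θ)) * (Real.exp (-t) * Real.sqrt t)) := by rw [hst]
      _ ≤ (D * θ) * (((1 + a * θ) * (1 + t)) * (Real.exp (-t) * Real.sqrt t)) := by
          apply mul_le_mul_of_nonneg_left _ (by positivity)
          apply mul_le_mul_of_nonneg_right _ (by positivity)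
          nlinarith [mul_nonneg ha0 hθ0, ht0.le]
      _ = (D * θ * (1 + a * θ)) * (Real.exp (-t) * Real.sqrt t + Real.exp (-t) * (Real.sqrt t * t)) := by
          ring
      _ = (D * θ * (1 + a * θ)) * g t := by
          rw [hgdef]
          beta_reduce
          rw [← sqrt_eq_rpow' ht0, ← t_mul_sqrt_eq_rpow ht0]
  have hnormint : ‖∫ t in Set.Ioi (0:ℝ), (fP t - fQ t)‖ ≤ (D * θ * (1 + a * θ)) * K := by
    have hgint2 : IntegrableOn (fun t => (D * θ * (1 + a * θ)) * g t) (Set.Ioi 0) :=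
      hgint.const_mul _
    have hbd := norm_integral_le_of_norm_le hgint2
      ((ae_restrict_iff' measurableSet_Ioi).mpr (ae_of_all _ hptwise))
    rw [MeasureTheory.integral_const_mul] at hbd
    exact hbd
  have hnorm : ‖T P - T Q‖ ≤ s * ((D * θ * (1 + a * θ)) * K) := by
    rw [hsplit, norm_smul, Real.norm_of_nonneg hs0]
    exact mul_le_mul_of_nonneg_left hnormint hs0
  have hθ1 : θ ≤ 1 + θ ^ 3 := by nlinarith [sq_nonneg (θ - 1), sq_nonneg (θ + 1), sq_nonneg θ]
  have hθ2 : θ ^ 2 ≤ 1 + θ ^ 3 := by nlinarith [sq_nonneg (θ - 1), sq_nonneg θ]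
  have ha1 : a ≤ 1 + a ^ 2 := by nlinarith [sq_nonneg (a - 1)]
  have hfinal : θ * (1 + a * θ) ≤ 3 * ((1 + a ^ 2 + b ^ 2) * (1 + θ ^ 3)) := by
    nlinarith [mul_le_mul ha1 hθ2 (by positivity) (by positivity : (0:ℝ) ≤ 1 + a ^ 2),
      sq_nonneg b, mul_nonneg (sq_nonneg b) (by positivity : (0:ℝ) ≤ 1 + θ ^ 3),
      mul_nonneg (sq_nonneg a) (by positivity : (0:ℝ) ≤ 1 + θ ^ 3)]
  calc ‖T P - T Q‖ ≤ s * ((D * θ * (1 + a * θ)) * K) := hnorm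
    _ = (s * K * D) * (θ * (1 + a * θ)) := by ring
    _ ≤ (s * K * D) * (3 * ((1 + a ^ 2 + b ^ 2) * (1 + θ ^ 3))) :=
        mul_le_mul_of_nonneg_left hfinal (by positivity)
    _ = s * K * 3 * (1 + a ^ 2 + b ^ 2) * (1 + θ ^ 3) * D := by ring
end

section
/- Kalman gain difference identity: for symmetric positive semidefinite d×d matrices P, Q, with K(P) = P Hᵀ (R + H P Hᵀ)^{-1}, it holds that K(P) - K(Q) = (Id - K(P)H)(P - Q)Hᵀ(R + H Q Hᵀ)^{-1}. -/
open Matrix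

/-- Kalman gain difference identity: with `K(P) = P Hᵀ (R + H P Hᵀ)⁻¹`,
`K(P) - K(Q) = (Id - K(P) H)(P - Q) Hᵀ (R + H Q Hᵀ)⁻¹`. -/
theorem stmt_12 {d q : ℕ} (P Q : Matrix (Fin d) (Fin d) ℝ)
    (hP : P.PosSemidef) (hQ : Q.PosSemidef)
    (H : Matrix (Fin q) (Fin d) ℝ) (R : Matrix (Fin q) (Fin q) ℝ) (hR : R.PosDef) :
    P * Hᵀ * (R + H * P * Hᵀ)⁻¹ - Q * Hᵀ * (R + H * Q * Hᵀ)⁻¹ =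
      (1 - (P * Hᵀ * (R + H * P * Hᵀ)⁻¹) * H) * (P - Q) * Hᵀ * (R + H * Q * Hᵀ)⁻¹ := by
  set A := R + H * P * Hᵀ with hA
  set B := R + H * Q * Hᵀ with hB
  have hPA : (H * P * Hᵀ).PosSemidef := by
    simpa using hP.mul_mul_conjTranspose_same H
  have hQB : (H * Q * Hᵀ).PosSemidef := by
    simpa using hQ.mul_mul_conjTranspose_same H
  have hAdet : IsUnit A.det := isUnit_iff_ne_zero.mpr (hR.add_posSemidef hPA).det_pos.ne'
  have hBdet : IsUnit B.det := isUnit_iff_ne_zero.mpr (hR.add_posSemidef hQB).det_pos.ne'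
  have hA1 : A⁻¹ * A = 1 := nonsing_inv_mul A hAdet
  have hB1 : B * B⁻¹ = 1 := mul_nonsing_inv B hBdet
  have key : H * (P - Q) * Hᵀ = A - B := by
    rw [Matrix.mul_sub, Matrix.sub_mul, hA, hB]
    abel
  have expand : (1 - (P * Hᵀ * A⁻¹) * H) * (P - Q) * Hᵀ * B⁻¹
      = (P - Q) * Hᵀ * B⁻¹ - P * Hᵀ * A⁻¹ * ((H * (P - Q) * Hᵀ) * B⁻¹) := by
    simp only [Matrix.sub_mul, Matrix.one_mul, Matrix.mul_assoc]
  have this1 : P * Hᵀ * A⁻¹ * ((A - B) * B⁻¹) = P * Hᵀ * B⁻¹ - P * Hᵀ * A⁻¹ := by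
    have cA : P * Hᵀ * A⁻¹ * A = P * Hᵀ := by
      rw [Matrix.mul_assoc, hA1, Matrix.mul_one]
    rw [Matrix.sub_mul, Matrix.mul_sub, ← Matrix.mul_assoc, ← Matrix.mul_assoc, cA,
      Matrix.mul_assoc (P * Hᵀ * A⁻¹), hB1, Matrix.mul_one]
  rw [expand, key, this1, Matrix.sub_mul, Matrix.sub_mul]
  abel
end

section
/- Lipschitz estimate for the Kalman gain: for symmetric positive semidefinite d×d matrices P, Q, ‖K(P) - K(Q)‖ ≤ (1 + ‖P‖‖H‖²‖R^{-1}‖)‖H‖‖R^{-1}‖‖P - Q‖ in spectral norm, where K(P) = P Hᵀ (R + H P Hᵀ)^{-1}. -/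
open Matrix
open scoped Matrix.Norms.L2Operator
open scoped MatrixOrder

noncomputable def ee {q : ℕ} (v : Fin q → ℝ) : EuclideanSpace ℝ (Fin q) :=
  (WithLp.equiv 2 (Fin q → ℝ)).symm v

-- op norm bound from vector bound
lemma aux_opnorm_le {m n : ℕ} {M : Matrix (Fin m) (Fin n) ℝ} {c : ℝ} (hc : 0 ≤ c)
    (h : ∀ v : Fin n → ℝ, ‖ee (M *ᵥ v)‖ ≤ c * ‖ee v‖) : ‖M‖ ≤ c := by
  rw [Matrix.l2_opNorm_def]
  apply ContinuousLinearMap.opNorm_le_bound _ hc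
  intro x
  have := h (WithLp.equiv 2 _ x)
  simpa [Matrix.toEuclideanLin, Matrix.toLpLin_apply, ee] using this

lemma aux_dot_eq_inner {q : ℕ} (v w : Fin q → ℝ) :
    v ⬝ᵥ w = inner ℝ (ee v) (ee w) := by
  simp [ee, PiLp.inner_apply, dotProduct, mul_comm]

lemma aux_mulVec_le {m n : ℕ} (M : Matrix (Fin m) (Fin n) ℝ) (v : Fin n → ℝ) :
    ‖ee (M *ᵥ v)‖ ≤ ‖M‖ * ‖ee v‖ :=
  M.l2_opNorm_mulVec (ee v)

lemma aux_sq_norm_le {q : ℕ} {A : Matrix (Fin q) (Fin q) ℝ} (hA : A.PosDef)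
    (v : Fin q → ℝ) : ‖ee v‖ ^ 2 ≤ ‖A⁻¹‖ * (v ⬝ᵥ (A *ᵥ v)) := by
  classical
  set S := CFC.sqrt A with hSdef
  have hSS : S * S = A := CFC.sqrt_mul_sqrt_self A hA.posSemidef.nonneg
  have hherm : Sᴴ = S := (CFC.sqrt_nonneg A).posSemidef.1
  have hsymm : Sᵀ = S := by
    rw [← Matrix.conjTranspose_eq_transpose_of_trivial]; exact hherm
  have hdet : IsUnit A.det := hA.det_pos.ne'.isUnit
  have hAinv : A⁻¹ * A = 1 := Matrix.nonsing_inv_mul A hdet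
  have hAinv' : A * A⁻¹ = 1 := Matrix.mul_nonsing_inv A hdet
  have hcomm : A⁻¹ * S = S * A⁻¹ := by
    have hSA : S * A = A * S := by rw [← hSS]; simp only [mul_assoc]
    calc A⁻¹ * S = A⁻¹ * S * (A * A⁻¹) := by rw [hAinv', mul_one]
      _ = A⁻¹ * (S * A) * A⁻¹ := by simp only [mul_assoc]
      _ = A⁻¹ * (A * S) * A⁻¹ := by rw [hSA]
      _ = (A⁻¹ * A) * (S * A⁻¹) := by simp only [mul_assoc]
      _ = S * A⁻¹ := by rw [hAinv, one_mul]
  have hAinvH : (A⁻¹)ᴴ = A⁻¹ := (hA.isHermitian.inv)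
  have hT : (A⁻¹ * S)ᴴ * (A⁻¹ * S) = A⁻¹ := by
    rw [Matrix.conjTranspose_mul, hherm, hAinvH]
    calc S * A⁻¹ * (A⁻¹ * S) = S * A⁻¹ * (S * A⁻¹) := by rw [hcomm]
      _ = S * (A⁻¹ * S) * A⁻¹ := by simp only [mul_assoc]
      _ = S * (S * A⁻¹) * A⁻¹ := by rw [hcomm]
      _ = (S * S) * (A⁻¹ * A⁻¹) := by simp only [mul_assoc]
      _ = A * A⁻¹ * A⁻¹ := by rw [hSS, mul_assoc]
      _ = A⁻¹ := by rw [hAinv', one_mul]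
  have hnorm : ‖A⁻¹ * S‖ * ‖A⁻¹ * S‖ = ‖A⁻¹‖ := by
    rw [← Matrix.l2_opNorm_conjTranspose_mul_self, hT]
  have hv : v = (A⁻¹ * S) *ᵥ (S *ᵥ v) := by
    rw [Matrix.mulVec_mulVec, Matrix.mul_assoc, hSS, hAinv, Matrix.one_mulVec]
  have h1 : v ⬝ᵥ (A *ᵥ v) = (S *ᵥ v) ⬝ᵥ (S *ᵥ v) := by
    rw [← hSS, ← Matrix.mulVec_mulVec, Matrix.dotProduct_mulVec, ← Matrix.mulVec_transpose,
      hsymm]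
  have h2 : (S *ᵥ v) ⬝ᵥ (S *ᵥ v) = ‖ee (S *ᵥ v)‖ ^ 2 := by
    rw [aux_dot_eq_inner, real_inner_self_eq_norm_sq]
  have h3 : ‖ee v‖ ≤ ‖A⁻¹ * S‖ * ‖ee (S *ᵥ v)‖ := by
    conv_lhs => rw [hv]
    exact aux_mulVec_le _ _
  have h4 : ‖ee v‖ ^ 2 ≤ (‖A⁻¹ * S‖ * ‖ee (S *ᵥ v)‖) ^ 2 :=
    pow_le_pow_left₀ (norm_nonneg _) h3 2
  calc ‖ee v‖ ^ 2 ≤ (‖A⁻¹ * S‖ * ‖ee (S *ᵥ v)‖) ^ 2 := h4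
    _ = (‖A⁻¹ * S‖ * ‖A⁻¹ * S‖) * ‖ee (S *ᵥ v)‖ ^ 2 := by ring
    _ = ‖A⁻¹‖ * (v ⬝ᵥ (A *ᵥ v)) := by rw [hnorm, h1, h2]

lemma aux_inv_norm_le {q : ℕ} {A B : Matrix (Fin q) (Fin q) ℝ} (hA : A.PosDef)
    (hB : B.PosSemidef) : ‖(A + B)⁻¹‖ ≤ ‖A⁻¹‖ := by
  classical
  have hM : (A + B).PosDef := hA.add_posSemidef hB
  apply aux_opnorm_le (norm_nonneg _)
  intro x
  set v := (A + B)⁻¹ *ᵥ x with hvdef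
  have hMx : (A + B) *ᵥ v = x := by
    rw [hvdef, Matrix.mulVec_mulVec, Matrix.mul_nonsing_inv _ hM.det_pos.ne'.isUnit,
      Matrix.one_mulVec]
  have h1 : ‖ee v‖ ^ 2 ≤ ‖A⁻¹‖ * (v ⬝ᵥ x) := by
    have ha := aux_sq_norm_le hA v
    have h2 : v ⬝ᵥ (A *ᵥ v) ≤ v ⬝ᵥ ((A + B) *ᵥ v) := by
      rw [Matrix.add_mulVec, dotProduct_add]
      have := hB.dotProduct_mulVec_nonneg v
      simp only [star_trivial] at this
      linarith
    rw [hMx] at h2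
    have := mul_le_mul_of_nonneg_left h2 (norm_nonneg (A⁻¹))
    linarith
  have hcs : v ⬝ᵥ x ≤ ‖ee v‖ * ‖ee x‖ := by
    rw [aux_dot_eq_inner]; exact real_inner_le_norm _ _
  rcases eq_or_lt_of_le (norm_nonneg (ee v)) with h0 | h0
  · rw [← h0]; positivity
  · nlinarith [norm_nonneg (ee x), norm_nonneg (A⁻¹)]

lemma aux_mul_le {a b c : ℕ} {A : Matrix (Fin a) (Fin b) ℝ} {B : Matrix (Fin b) (Fin c) ℝ}
    {x y : ℝ} (hA : ‖A‖ ≤ x) (hB : ‖B‖ ≤ y) : ‖A * B‖ ≤ x * y :=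
  (Matrix.l2_opNorm_mul A B).trans
    (mul_le_mul hA hB (norm_nonneg _) ((norm_nonneg _).trans hA))


/-- Lipschitz estimate for the Kalman gain `K(P) = P Hᵀ (R + H P Hᵀ)⁻¹`:
`‖K(P) - K(Q)‖ ≤ (1 + ‖P‖ ‖H‖² ‖R⁻¹‖) ‖H‖ ‖R⁻¹‖ ‖P - Q‖`. -/
theorem stmt_13 {d q : ℕ} (P Q : Matrix (Fin d) (Fin d) ℝ)
    (hP : P.PosSemidef) (hQ : Q.PosSemidef)
    (H : Matrix (Fin q) (Fin d) ℝ) (R : Matrix (Fin q) (Fin q) ℝ) (hR : R.PosDef) :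
    ‖P * Hᵀ * (R + H * P * Hᵀ)⁻¹ - Q * Hᵀ * (R + H * Q * Hᵀ)⁻¹‖ ≤
      (1 + ‖P‖ * ‖H‖ ^ 2 * ‖R⁻¹‖) * ‖H‖ * ‖R⁻¹‖ * ‖P - Q‖ := by
  classical
  set SP := R + H * P * Hᵀ with hSPdef
  set SQ := R + H * Q * Hᵀ with hSQdef
  have hHt : Hᵀ = Hᴴ := (Matrix.conjTranspose_eq_transpose_of_trivial H).symm
  have hPsd : (H * P * Hᵀ).PosSemidef := by
    rw [hHt]; exact hP.mul_mul_conjTranspose_same H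
  have hQsd : (H * Q * Hᵀ).PosSemidef := by
    rw [hHt]; exact hQ.mul_mul_conjTranspose_same H
  have hSP : SP.PosDef := hR.add_posSemidef hPsd
  have hSQ : SQ.PosDef := hR.add_posSemidef hQsd
  have hSPi : SP⁻¹ * SP = 1 := Matrix.nonsing_inv_mul _ hSP.det_pos.ne'.isUnit
  have hSQi : SQ * SQ⁻¹ = 1 := Matrix.mul_nonsing_inv _ hSQ.det_pos.ne'.isUnit
  have hnSP : ‖SP⁻¹‖ ≤ ‖R⁻¹‖ := aux_inv_norm_le hR hPsd
  have hnSQ : ‖SQ⁻¹‖ ≤ ‖R⁻¹‖ := aux_inv_norm_le hR hQsd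
  have hnH : ‖Hᵀ‖ = ‖H‖ := by rw [hHt]; exact Matrix.l2_opNorm_conjTranspose H
  have key : P * Hᵀ * SP⁻¹ - Q * Hᵀ * SQ⁻¹ =
      (P - Q) * Hᵀ * SQ⁻¹ + P * Hᵀ * (SP⁻¹ * (H * (Q - P) * Hᵀ) * SQ⁻¹) := by
    have h1 : H * (Q - P) * Hᵀ = SQ - SP := by
      rw [hSQdef, hSPdef]; simp only [Matrix.mul_sub, Matrix.sub_mul]; abel
    have h2 : SP⁻¹ * (SQ - SP) * SQ⁻¹ = SP⁻¹ - SQ⁻¹ := by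
      have : SP⁻¹ * (SQ - SP) * SQ⁻¹ = SP⁻¹ * (SQ * SQ⁻¹) - (SP⁻¹ * SP) * SQ⁻¹ := by
        noncomm_ring
      rw [this, hSQi, hSPi, mul_one, one_mul]
    rw [h1, h2]
    simp only [Matrix.mul_sub, Matrix.sub_mul]
    abel
  have hX : ‖H * (Q - P) * Hᵀ‖ ≤ ‖H‖ * ‖P - Q‖ * ‖Hᵀ‖ :=
    aux_mul_le (aux_mul_le le_rfl (le_of_eq (norm_sub_rev Q P))) le_rfl
  have t1 : ‖(P - Q) * Hᵀ * SQ⁻¹‖ ≤ ‖P - Q‖ * ‖Hᵀ‖ * ‖R⁻¹‖ :=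
    aux_mul_le (aux_mul_le le_rfl le_rfl) hnSQ
  have t2 : ‖P * Hᵀ * (SP⁻¹ * (H * (Q - P) * Hᵀ) * SQ⁻¹)‖ ≤
      ‖P‖ * ‖Hᵀ‖ * (‖R⁻¹‖ * (‖H‖ * ‖P - Q‖ * ‖Hᵀ‖) * ‖R⁻¹‖) :=
    aux_mul_le (aux_mul_le le_rfl le_rfl) (aux_mul_le (aux_mul_le hnSP hX) hnSQ)
  calc ‖P * Hᵀ * SP⁻¹ - Q * Hᵀ * SQ⁻¹‖
      = ‖(P - Q) * Hᵀ * SQ⁻¹ + P * Hᵀ * (SP⁻¹ * (H * (Q - P) * Hᵀ) * SQ⁻¹)‖ := by rw [key]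
    _ ≤ ‖(P - Q) * Hᵀ * SQ⁻¹‖ + ‖P * Hᵀ * (SP⁻¹ * (H * (Q - P) * Hᵀ) * SQ⁻¹)‖ :=
        norm_add_le _ _
    _ ≤ ‖P - Q‖ * ‖Hᵀ‖ * ‖R⁻¹‖ +
        ‖P‖ * ‖Hᵀ‖ * (‖R⁻¹‖ * (‖H‖ * ‖P - Q‖ * ‖Hᵀ‖) * ‖R⁻¹‖) := add_le_add t1 t2
    _ = (1 + ‖P‖ * ‖H‖ ^ 2 * ‖R⁻¹‖) * ‖H‖ * ‖R⁻¹‖ * ‖P - Q‖ := by rw [hnH]; ring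
end

section
/- Empirical covariance difference bound: let X₁,...,X_M and Y₁,...,Y_M be vectors in ℝ^d with empirical means x̄ = (1/M)ΣXᵢ, ȳ = (1/M)ΣYᵢ and empirical covariances P = (1/(M-1))Σ(Xᵢ-x̄)(Xᵢ-x̄)ᵀ, P̄ = (1/(M-1))Σ(Yᵢ-ȳ)(Yᵢ-ȳ)ᵀ. Then ‖P - P̄‖ ≤ 2√(M/(M-1)) (tr(P)^{1/2} + tr(P̄)^{1/2}) ((1/M)Σᵢ‖Xᵢ-Yᵢ‖²)^{1/2} in spectral norm. -/
open Matrix Finset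
open scoped Matrix.Norms.L2Operator

lemma vecMulVec_opNorm_le' {d : ℕ} (u v : EuclideanSpace ℝ (Fin d)) :
    ‖(Matrix.of fun k l => u k * v l : Matrix (Fin d) (Fin d) ℝ)‖ ≤ ‖u‖ * ‖v‖ := by
  rw [Matrix.l2_opNorm_def]
  refine ContinuousLinearMap.opNorm_le_bound _ (by positivity) fun x => ?_
  have hval : (LinearMap.toContinuousLinearMap (Matrix.toEuclideanLin
      (Matrix.of fun k l => u k * v l))) x = (inner ℝ v x : ℝ) • u := by
    ext k
    simp [Matrix.toEuclideanLin_apply, Matrix.mulVec, dotProduct,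
      PiLp.inner_apply, PiLp.smul_apply, smul_eq_mul]
    rw [Finset.sum_mul]
    exact Finset.sum_congr rfl fun l _ => by ring
  rw [LinearEquiv.trans_apply, hval, norm_smul, Real.norm_eq_abs]
  calc |(inner ℝ v x : ℝ)| * ‖u‖ ≤ (‖v‖ * ‖x‖) * ‖u‖ := by
        gcongr; exact abs_real_inner_le_norm v x
    _ = ‖u‖ * ‖v‖ * ‖x‖ := by ring

lemma sum_norm_sub_mean_sq_le {d M : ℕ} (hM0 : (0:ℝ) < (M:ℝ))
    (Z : Fin M → EuclideanSpace ℝ (Fin d))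
    (zb : EuclideanSpace ℝ (Fin d)) (hzb : zb = (M:ℝ)⁻¹ • ∑ i, Z i) :
    ∑ i, ‖Z i - zb‖^2 ≤ ∑ i, ‖Z i‖^2 := by
  have hsum : ∑ i, Z i = (M:ℝ) • zb := by
    rw [hzb, smul_inv_smul₀ (ne_of_gt hM0)]
  have hexp : ∑ i, ‖Z i - zb‖^2
      = ∑ i, ‖Z i‖^2 - 2 * ((M:ℝ) * ‖zb‖^2) + (M:ℝ) * ‖zb‖^2 := by
    have : ∀ i : Fin M, ‖Z i - zb‖^2 = ‖Z i‖^2 - 2 * (inner ℝ (Z i) zb : ℝ) + ‖zb‖^2 :=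
      fun i => norm_sub_sq_real _ _
    rw [Finset.sum_congr rfl fun i _ => this i, Finset.sum_add_distrib,
      Finset.sum_sub_distrib, ← Finset.mul_sum, ← sum_inner, hsum,
      real_inner_smul_left, real_inner_self_eq_norm_sq, Finset.sum_const,
      Finset.card_univ, Fintype.card_fin, nsmul_eq_mul]
  nlinarith [norm_nonneg zb, sq_nonneg ‖zb‖, hexp]

/-- Empirical covariance difference bound:
`‖P - P̄‖ ≤ 2 √(M/(M-1)) (tr(P)^{1/2} + tr(P̄)^{1/2}) ((1/M) Σᵢ ‖Xᵢ - Yᵢ‖²)^{1/2}`. -/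
theorem stmt_17 {d M : ℕ} (hM : 2 ≤ M)
    (X Y : Fin M → EuclideanSpace ℝ (Fin d))
    (xbar ybar : EuclideanSpace ℝ (Fin d))
    (hx : xbar = (M : ℝ)⁻¹ • ∑ i, X i) (hy : ybar = (M : ℝ)⁻¹ • ∑ i, Y i)
    (P Pbar : Matrix (Fin d) (Fin d) ℝ)
    (hP : P = ((M : ℝ) - 1)⁻¹ •
      ∑ i, Matrix.of fun k l => (X i k - xbar k) * (X i l - xbar l))
    (hPbar : Pbar = ((M : ℝ) - 1)⁻¹ •
      ∑ i, Matrix.of fun k l => (Y i k - ybar k) * (Y i l - ybar l)) :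
    ‖P - Pbar‖ ≤
      2 * Real.sqrt ((M : ℝ) / ((M : ℝ) - 1)) *
        (Real.sqrt P.trace + Real.sqrt Pbar.trace) *
        Real.sqrt ((M : ℝ)⁻¹ * ∑ i, ‖X i - Y i‖ ^ 2) := by
  have hM2 : (2:ℝ) ≤ (M:ℝ) := by exact_mod_cast hM
  have hM1 : (0:ℝ) < (M:ℝ) - 1 := by linarith
  have hM0 : (0:ℝ) < (M:ℝ) := by linarith
  set a : Fin M → EuclideanSpace ℝ (Fin d) := fun i => X i - xbar with ha
  set b : Fin M → EuclideanSpace ℝ (Fin d) := fun i => Y i - ybar with hb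
  set c : Fin M → EuclideanSpace ℝ (Fin d) := fun i => a i - b i with hc
  -- squared norms as coordinate sums
  have hnormsq : ∀ (u : EuclideanSpace ℝ (Fin d)), ‖u‖^2 = ∑ k, u k ^ 2 := by
    intro u
    rw [← real_inner_self_eq_norm_sq, PiLp.inner_apply]
    exact Finset.sum_congr rfl fun k _ => by simp [RCLike.inner_apply]
  -- traces
  have hPtr : P.trace = ((M:ℝ)-1)⁻¹ * ∑ i, ‖a i‖^2 := by
    rw [hP, Matrix.trace_smul, Matrix.trace_sum, smul_eq_mul]
    congr 1
    refine Finset.sum_congr rfl fun i _ => ?_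
    rw [Matrix.trace, hnormsq]
    refine Finset.sum_congr rfl fun k _ => by
      simp [Matrix.diag, ha]; ring
  have hPbtr : Pbar.trace = ((M:ℝ)-1)⁻¹ * ∑ i, ‖b i‖^2 := by
    rw [hPbar, Matrix.trace_smul, Matrix.trace_sum, smul_eq_mul]
    congr 1
    refine Finset.sum_congr rfl fun i _ => ?_
    rw [Matrix.trace, hnormsq]
    refine Finset.sum_congr rfl fun k _ => by
      simp [Matrix.diag, hb]; ring
  have hAa : ∑ i, ‖a i‖^2 = ((M:ℝ)-1) * P.trace := by
    rw [hPtr]; field_simp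
  have hBb : ∑ i, ‖b i‖^2 = ((M:ℝ)-1) * Pbar.trace := by
    rw [hPbtr]; field_simp
  -- decomposition of the difference
  have hdiff : P - Pbar = ((M:ℝ)-1)⁻¹ •
      ∑ i, ((Matrix.of fun k l => a i k * c i l) +
        (Matrix.of fun k l => c i k * b i l)) := by
    rw [hP, hPbar, ← smul_sub, ← Finset.sum_sub_distrib]
    congr 1
    refine Finset.sum_congr rfl fun i _ => ?_
    ext k l
    simp [ha, hb, hc, Matrix.sub_apply]
    ring
  -- operator norm bound via triangle inequality and rank-one bounds
  have hnorm : ‖P - Pbar‖ ≤ ((M:ℝ)-1)⁻¹ * ∑ i, (‖a i‖ * ‖c i‖ + ‖c i‖ * ‖b i‖) := by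
    rw [hdiff, norm_smul, Real.norm_eq_abs, abs_of_pos (inv_pos.mpr hM1)]
    gcongr
    calc ‖∑ i, ((Matrix.of fun k l => a i k * c i l) +
          (Matrix.of fun k l => c i k * b i l))‖
        ≤ ∑ i, ‖(Matrix.of fun k l => a i k * c i l) +
          (Matrix.of fun k l => c i k * b i l)‖ := norm_sum_le _ _
      _ ≤ ∑ i, (‖a i‖ * ‖c i‖ + ‖c i‖ * ‖b i‖) :=
          Finset.sum_le_sum fun i _ => (norm_add_le _ _).trans
            (add_le_add (vecMulVec_opNorm_le' _ _) (vecMulVec_opNorm_le' _ _))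
  -- Cauchy-Schwarz
  have hCS : ∑ i, (‖a i‖ * ‖c i‖ + ‖c i‖ * ‖b i‖) ≤
      (Real.sqrt (∑ i, ‖a i‖^2) + Real.sqrt (∑ i, ‖b i‖^2)) * Real.sqrt (∑ i, ‖c i‖^2) := by
    rw [Finset.sum_add_distrib, add_mul]
    refine add_le_add (Real.sum_mul_le_sqrt_mul_sqrt _ _ _) ?_
    calc ∑ i, ‖c i‖ * ‖b i‖ = ∑ i, ‖b i‖ * ‖c i‖ :=
          Finset.sum_congr rfl fun i _ => mul_comm _ _
      _ ≤ _ := Real.sum_mul_le_sqrt_mul_sqrt _ _ _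
  -- centered differences bounded by raw differences
  have hcle : ∑ i, ‖c i‖^2 ≤ ∑ i, ‖X i - Y i‖^2 := by
    have hci : ∀ i, c i = (X i - Y i) - (xbar - ybar) := fun i => by
      simp only [hc, ha, hb]; abel
    have hzb : xbar - ybar = (M:ℝ)⁻¹ • ∑ i, (X i - Y i) := by
      rw [hx, hy, ← smul_sub, ← Finset.sum_sub_distrib]
    calc ∑ i, ‖c i‖^2 = ∑ i, ‖(X i - Y i) - (xbar - ybar)‖^2 :=
          Finset.sum_congr rfl fun i _ => by rw [hci i]
      _ ≤ ∑ i, ‖X i - Y i‖^2 :=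
          sum_norm_sub_mean_sq_le hM0 (fun i => X i - Y i) _ hzb
  -- assemble
  have hL : ‖P - Pbar‖ ≤ ((M:ℝ)-1)⁻¹ *
      ((Real.sqrt (((M:ℝ)-1) * P.trace) + Real.sqrt (((M:ℝ)-1) * Pbar.trace)) *
        Real.sqrt (∑ i, ‖c i‖^2)) := by
    rw [← hAa, ← hBb]
    calc ‖P - Pbar‖ ≤ ((M:ℝ)-1)⁻¹ * ∑ i, (‖a i‖ * ‖c i‖ + ‖c i‖ * ‖b i‖) := hnorm
      _ ≤ _ := by gcongr
  -- final arithmetic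
  have h1 : Real.sqrt (((M:ℝ)-1) * P.trace) = Real.sqrt ((M:ℝ)-1) * Real.sqrt P.trace :=
    Real.sqrt_mul (le_of_lt hM1) _
  have h2 : Real.sqrt (((M:ℝ)-1) * Pbar.trace) = Real.sqrt ((M:ℝ)-1) * Real.sqrt Pbar.trace :=
    Real.sqrt_mul (le_of_lt hM1) _
  have h3 : Real.sqrt (∑ i, ‖c i‖^2) ≤ Real.sqrt (∑ i, ‖X i - Y i‖^2) :=
    Real.sqrt_le_sqrt hcle
  have h4 : Real.sqrt (∑ i, ‖X i - Y i‖^2)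
      = Real.sqrt (M:ℝ) * Real.sqrt ((M:ℝ)⁻¹ * ∑ i, ‖X i - Y i‖^2) := by
    rw [← Real.sqrt_mul (le_of_lt hM0)]
    congr 1
    field_simp
  have hms : Real.sqrt ((M:ℝ)-1) * Real.sqrt ((M:ℝ)-1) = (M:ℝ)-1 :=
    Real.mul_self_sqrt (le_of_lt hM1)
  have h5 : ((M:ℝ)-1)⁻¹ * Real.sqrt ((M:ℝ)-1) * Real.sqrt (M:ℝ)
      = Real.sqrt ((M:ℝ) / ((M:ℝ)-1)) := by
    rw [Real.sqrt_div' (M:ℝ) (le_of_lt hM1)]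
    field_simp
    linear_combination hms
  calc ‖P - Pbar‖
      ≤ ((M:ℝ)-1)⁻¹ *
        ((Real.sqrt (((M:ℝ)-1) * P.trace) + Real.sqrt (((M:ℝ)-1) * Pbar.trace)) *
          Real.sqrt (∑ i, ‖c i‖^2)) := hL
    _ ≤ ((M:ℝ)-1)⁻¹ *
        ((Real.sqrt (((M:ℝ)-1) * P.trace) + Real.sqrt (((M:ℝ)-1) * Pbar.trace)) *
          Real.sqrt (∑ i, ‖X i - Y i‖^2)) := by gcongr
    _ = (((M:ℝ)-1)⁻¹ * Real.sqrt ((M:ℝ)-1) * Real.sqrt (M:ℝ)) *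
        (Real.sqrt P.trace + Real.sqrt Pbar.trace) *
        Real.sqrt ((M:ℝ)⁻¹ * ∑ i, ‖X i - Y i‖^2) := by
        rw [h1, h2, h4]; ring
    _ = Real.sqrt ((M:ℝ) / ((M:ℝ)-1)) * (Real.sqrt P.trace + Real.sqrt Pbar.trace) *
        Real.sqrt ((M:ℝ)⁻¹ * ∑ i, ‖X i - Y i‖^2) := by rw [h5]
    _ ≤ 2 * Real.sqrt ((M:ℝ) / ((M:ℝ)-1)) * (Real.sqrt P.trace + Real.sqrt Pbar.trace) *
        Real.sqrt ((M:ℝ)⁻¹ * ∑ i, ‖X i - Y i‖^2) := by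
        have : (0:ℝ) ≤ Real.sqrt ((M:ℝ) / ((M:ℝ)-1)) *
            (Real.sqrt P.trace + Real.sqrt Pbar.trace) *
            Real.sqrt ((M:ℝ)⁻¹ * ∑ i, ‖X i - Y i‖^2) := by positivity
        linarith
end
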